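/- arXiv:2410.04413 — 6 statements merged into one kernel-verified Lean document; each statement's English description precedes it below -/
import Mathlib

section
/- Let G be a finite simple graph and let F be an induced subgraph of G whose vertex set is partitioned into two nonempty parts S and T. Suppose 2e(F[S])/|S| > a, 2e(F[T])/|T| ≥ b, e_F(S,T)/|S| ≤ c and e_F(S,T)/|T| ≤ c, where a, b ≥ 0 and c > 0 are real numbers. Then λ₂(G) > (a + b − √((a−b)² + 4c²))/2. -/
open Classical in
/-- The adjacency matrix of a finite simple graph (over `ℝ`) is Hermitian. -/
lemma adjMatrix_isHermitian {V : Type*} [Fintype V] (G : SimpleGraph V) [DecidableRel G.Adj] :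
    (G.adjMatrix ℝ).IsHermitian := by
  ext i j
  simp [Matrix.conjTranspose_apply, SimpleGraph.adj_comm]

open Classical in
/-- The multiset of adjacency eigenvalues (with multiplicity) of a finite simple graph. -/
noncomputable def adjEigenvalues {V : Type*} [Fintype V] (G : SimpleGraph V) : Multiset ℝ :=
  Finset.univ.val.map (adjMatrix_isHermitian G).eigenvalues

open Classical in
/-- `lambda2 G` is the second largest adjacency eigenvalue (with multiplicity) of `G`:
the second entry of the list of all eigenvalues sorted in decreasing order, i.e. the entry at
position `|V| - 2` (0-indexed) of the increasingly sorted list. -/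
noncomputable def lambda2 {V : Type*} [Fintype V] (G : SimpleGraph V) : ℝ :=
  ((adjEigenvalues G).sort (· ≤ ·)).getD (Fintype.card V - 2) 0

/-- The number of ordered pairs `(u, v)` of adjacent vertices of `G` with `u ∈ A` and `v ∈ B`.
For disjoint sets `A` and `B` this is `e_G(A, B)`, the number of edges between `A` and `B`;
for `A = B` it is twice the number of edges of `G` inside `A`. -/
noncomputable def crossPairs {V : Type*} (G : SimpleGraph V) (A B : Set V) : ℕ :=
  {p : V × V | p.1 ∈ A ∧ p.2 ∈ B ∧ G.Adj p.1 p.2}.ncard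

section Auxiliary

open Matrix

/-- Spectral decomposition of the quadratic form and norm of a vector. -/
lemma aux_spec_decomp {V : Type*} [Fintype V] [DecidableEq V] (A : Matrix V V ℝ)
    (hA : A.IsHermitian) (w : V → ℝ) :
    w ⬝ᵥ (A *ᵥ w) = ∑ i, hA.eigenvalues i * ((star (hA.eigenvectorUnitary : Matrix V V ℝ) *ᵥ w) i)^2 ∧
    w ⬝ᵥ w = ∑ i, ((star (hA.eigenvectorUnitary : Matrix V V ℝ) *ᵥ w) i)^2 := by
  have hspec := hA.spectral_theorem
  have h1 : A *ᵥ w = (hA.eigenvectorUnitary : Matrix V V ℝ) *ᵥ (Matrix.diagonal hA.eigenvalues *ᵥ (star (hA.eigenvectorUnitary : Matrix V V ℝ) *ᵥ w)) := by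
    conv_lhs => rw [hspec]
    simp [Matrix.mulVec_mulVec, Matrix.mul_assoc]
  have hvm : ∀ z : V → ℝ, w ⬝ᵥ ((hA.eigenvectorUnitary : Matrix V V ℝ) *ᵥ z)
      = (star (hA.eigenvectorUnitary : Matrix V V ℝ) *ᵥ w) ⬝ᵥ z := by
    intro z
    rw [Matrix.dotProduct_mulVec]
    congr 1
    ext i
    simp [Matrix.vecMul, Matrix.mulVec, dotProduct, mul_comm]
  constructor
  · rw [h1, hvm, dotProduct]
    refine Finset.sum_congr rfl fun i _ => ?_
    rw [Matrix.mulVec_diagonal]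
    ring
  · have h2 : w = (hA.eigenvectorUnitary : Matrix V V ℝ) *ᵥ (star (hA.eigenvectorUnitary : Matrix V V ℝ) *ᵥ w) := by
      rw [Matrix.mulVec_mulVec, (Matrix.mem_unitaryGroup_iff).mp (hA.eigenvectorUnitary).2, Matrix.one_mulVec]
    calc w ⬝ᵥ w = w ⬝ᵥ ((hA.eigenvectorUnitary : Matrix V V ℝ) *ᵥ (star (hA.eigenvectorUnitary : Matrix V V ℝ) *ᵥ w)) := by rw [← h2]
    _ = ∑ i, ((star (hA.eigenvectorUnitary : Matrix V V ℝ) *ᵥ w) i)^2 := by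
        rw [hvm, dotProduct]
        exact Finset.sum_congr rfl fun i _ => (sq _).symm

open Classical in
lemma aux_list_filter_sorted (l : List ℝ) (hs : l.Pairwise (· ≤ ·)) (hl : 2 ≤ l.length) :
    (l.filter (fun x => decide (l.getD (l.length - 2) 0 < x))).length ≤ 1 := by
  have hidx : l.length - 2 < l.length := by omega
  have hL : l.getD (l.length - 2) 0 = l.get ⟨l.length - 2, hidx⟩ := List.getD_eq_getElem _ _ hidx
  have hkey : ∀ a ∈ l.take (l.length - 1), ¬ (l.getD (l.length - 2) 0 < a) := by
    intro a ha
    obtain ⟨k, hk, hk2⟩ := List.mem_take_iff_getElem.mp ha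
    have hk' : k < l.length - 1 := lt_min_iff.mp hk |>.1
    have hle : l.get ⟨k, by omega⟩ ≤ l.get ⟨l.length - 2, hidx⟩ := by
      rcases lt_or_eq_of_le (show k ≤ l.length - 2 by omega) with h | h
      · exact List.Pairwise.rel_get_of_lt hs (by simpa [Fin.mk_lt_mk] using h)
      · simp [h]
    rw [hL, not_lt, ← hk2]
    simpa using hle
  have hsplit : l.filter (fun x => decide (l.getD (l.length - 2) 0 < x))
      = (l.take (l.length - 1)).filter (fun x => decide (l.getD (l.length - 2) 0 < x))
        ++ (l.drop (l.length - 1)).filter (fun x => decide (l.getD (l.length - 2) 0 < x)) := by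
    rw [← List.filter_append, List.take_append_drop]
  have htake : (l.take (l.length - 1)).filter (fun x => decide (l.getD (l.length - 2) 0 < x)) = [] := by
    rw [List.filter_eq_nil_iff]
    intro a ha
    simpa using hkey a ha
  calc (l.filter (fun x => decide (l.getD (l.length - 2) 0 < x))).length
      ≤ (l.drop (l.length - 1)).length := by
        rw [hsplit, htake, List.nil_append]; exact List.length_filter_le _ _
  _ ≤ 1 := by rw [List.length_drop]; omega

open Classical in
lemma aux_filter_sort_card (m : Multiset ℝ) (hm : 2 ≤ m.card) :
    (m.filter (fun x => ((m.sort (· ≤ ·)).getD (m.card - 2) 0) < x)).card ≤ 1 := by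
  have hl : (m.sort (· ≤ ·)).length = m.card := m.length_sort _
  have h := aux_list_filter_sorted (m.sort (· ≤ ·)) (m.pairwise_sort _) (by omega)
  rw [hl] at h
  have hml : ((m.sort (· ≤ ·) : List ℝ) : Multiset ℝ) = m := m.sort_eq _
  calc (m.filter (fun x => ((m.sort (· ≤ ·)).getD (m.card - 2) 0) < x)).card
      = (Multiset.filter (fun x => ((m.sort (· ≤ ·)).getD (m.card - 2) 0) < x) ((m.sort (· ≤ ·) : List ℝ) : Multiset ℝ)).card := by rw [hml]
  _ ≤ 1 := by
      rw [Multiset.filter_coe]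
      simpa using h

lemma aux_claim2 (a b c d1 d2 f : ℝ) (hc : 0 < c)
    (hd1 : a < d1) (hd2 : b ≤ d2) (hf : 0 ≤ f) (hfc : f ≤ c)
    (s0 r : ℝ) (hs0 : 0 ≤ s0) (hr : 0 < r)
    (hs0sq : s0^2 = (d1-d2)^2 + 4*f^2) (hrsq : r^2 = (a-b)^2 + 4*c^2) :
    a + b - r < d1 + d2 - s0 := by
  have hu1 : d1 - d2 ≤ s0 := by nlinarith [sq_nonneg (s0 - (d1-d2)), sq_nonneg (s0 + (d1-d2))]
  have hu2 : -(d1 - d2) ≤ s0 := by nlinarith [sq_nonneg (s0 - (d1-d2)), sq_nonneg (s0 + (d1-d2))]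
  have hw1 : a - b < r := by nlinarith [sq_nonneg (r - (a-b)), sq_nonneg (r + (a-b))]
  have hw2 : -(a - b) < r := by nlinarith [sq_nonneg (r - (a-b)), sq_nonneg (r + (a-b))]
  nlinarith [mul_nonneg (sub_nonneg.2 hu1) (sub_nonneg.2 hw1.le), mul_nonneg (sub_nonneg.2 hu2) (sub_nonneg.2 hw2.le),
    mul_nonneg (sub_nonneg.2 hu1) (sub_nonneg.2 hw2.le), mul_nonneg (sub_nonneg.2 hu2) (sub_nonneg.2 hw1.le),
    mul_pos (sub_pos.2 hd1) hr, mul_nonneg (sub_nonneg.2 hd2) hr.le, mul_nonneg (sub_nonneg.2 hd2) hs0,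
    mul_nonneg hf hf, mul_nonneg hc.le hc.le,
    mul_nonneg (sub_nonneg.2 hfc) (add_nonneg hf hc.le)]

lemma aux_claim1 (d1 d2 f x y s0 : ℝ) (hs0 : 0 ≤ s0) (hs0sq : s0^2 = (d1-d2)^2 + 4*f^2)
    (hX : 0 < x^2 + y^2) :
    (d1 + d2 - s0) / 2 * (x^2+y^2) ≤ d1*x^2 + 2*f*x*y + d2*y^2 := by
  nlinarith [sq_nonneg (2*f*(x^2 - y^2) - (d1-d2)*(2*x*y)), mul_nonneg hs0 (le_of_lt hX),
    sq_nonneg (x^2+y^2), mul_nonneg (mul_nonneg hs0 hs0) (sq_nonneg (x^2+y^2)),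
    sq_nonneg ((d1-d2)*(x^2-y^2) + 4*f*x*y + s0*(x^2+y^2))]

lemma aux_key_ineq (a b c d1 d2 f x y : ℝ) (ha : 0 ≤ a) (hb : 0 ≤ b) (hc : 0 < c)
    (hd1 : a < d1) (hd2 : b ≤ d2) (hf : 0 ≤ f) (hfc : f ≤ c) (hX : 0 < x^2 + y^2) :
    (a + b - Real.sqrt ((a-b)^2 + 4*c^2)) / 2 * (x^2+y^2) < d1*x^2 + 2*f*x*y + d2*y^2 := by
  have hs0 : 0 ≤ Real.sqrt ((d1-d2)^2 + 4*f^2) := Real.sqrt_nonneg _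
  have hs0sq : (Real.sqrt ((d1-d2)^2 + 4*f^2))^2 = (d1-d2)^2 + 4*f^2 := Real.sq_sqrt (by positivity)
  have hrsq : (Real.sqrt ((a-b)^2 + 4*c^2))^2 = (a-b)^2 + 4*c^2 := Real.sq_sqrt (by positivity)
  have hr : 0 < Real.sqrt ((a-b)^2 + 4*c^2) := Real.sqrt_pos.mpr (by positivity)
  have claim2 := aux_claim2 a b c d1 d2 f hc hd1 hd2 hf hfc _ _ hs0 hr hs0sq hrsq
  calc (a + b - Real.sqrt ((a-b)^2 + 4*c^2)) / 2 * (x^2+y^2)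
      < (d1 + d2 - Real.sqrt ((d1-d2)^2 + 4*f^2)) / 2 * (x^2+y^2) := by
        apply mul_lt_mul_of_pos_right _ hX
        linarith
  _ ≤ d1*x^2 + 2*f*x*y + d2*y^2 := aux_claim1 d1 d2 f x y _ hs0 hs0sq hX

open Classical in
lemma aux_crossPairs_dot {V : Type*} [Fintype V] (G : SimpleGraph V) [DecidableRel G.Adj]
    (A B : Finset V) :
    (fun i => if i ∈ A then (1:ℝ) else 0) ⬝ᵥ (G.adjMatrix ℝ *ᵥ (fun j => if j ∈ B then (1:ℝ) else 0))
      = ((Finset.univ.filter (fun p : V × V => p.1 ∈ A ∧ p.2 ∈ B ∧ G.Adj p.1 p.2)).card : ℝ) := by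
  rw [dotProduct]
  have hmv : ∀ i, (G.adjMatrix ℝ *ᵥ (fun j => if j ∈ B then (1:ℝ) else 0)) i
      = ∑ j, if G.Adj i j ∧ j ∈ B then (1:ℝ) else 0 := by
    intro i
    rw [Matrix.mulVec, dotProduct]
    refine Finset.sum_congr rfl fun j _ => ?_
    by_cases h1 : G.Adj i j <;> by_cases h2 : j ∈ B <;> simp [h1, h2]
  calc ∑ i, (if i ∈ A then (1:ℝ) else 0) * (G.adjMatrix ℝ *ᵥ (fun j => if j ∈ B then (1:ℝ) else 0)) i
      = ∑ i, ∑ j, (if i ∈ A ∧ j ∈ B ∧ G.Adj i j then (1:ℝ) else 0) := by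
        refine Finset.sum_congr rfl fun i _ => ?_
        rw [hmv, Finset.mul_sum]
        refine Finset.sum_congr rfl fun j _ => ?_
        by_cases h1 : i ∈ A <;> by_cases h2 : j ∈ B <;> by_cases h3 : G.Adj i j <;> simp [h1, h2, h3]
  _ = ∑ p : V × V, (if p.1 ∈ A ∧ p.2 ∈ B ∧ G.Adj p.1 p.2 then (1:ℝ) else 0) := by
        rw [← Finset.univ_product_univ, Finset.sum_product]
  _ = ((Finset.univ.filter (fun p : V × V => p.1 ∈ A ∧ p.2 ∈ B ∧ G.Adj p.1 p.2)).card : ℝ) := by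
        rw [Finset.sum_boole]

open Classical in
lemma aux_crossPairs_card {V : Type*} [Fintype V] (G : SimpleGraph V) [DecidableRel G.Adj]
    (A B : Finset V) :
    (crossPairs G ↑A ↑B : ℝ)
      = ((Finset.univ.filter (fun p : V × V => p.1 ∈ A ∧ p.2 ∈ B ∧ G.Adj p.1 p.2)).card : ℝ) := by
  congr 1
  rw [crossPairs, Set.ncard_eq_toFinset_card']
  congr 1
  ext p
  simp

end Auxiliary
set_option maxHeartbeats 1000000 in
open Matrix in
open Classical in
theorem aux_main {V : Type*} [Fintype V] (G : SimpleGraph V)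
    (S T : Finset V) (hS : S.Nonempty) (hT : T.Nonempty) (hST : Disjoint S T)
    (a b c : ℝ) (ha : 0 ≤ a) (hb : 0 ≤ b) (hc : 0 < c)
    (h1 : a < (crossPairs G ↑S ↑S : ℝ) / S.card)
    (h2 : b ≤ (crossPairs G ↑T ↑T : ℝ) / T.card)
    (h3 : (crossPairs G ↑S ↑T : ℝ) / S.card ≤ c)
    (h4 : (crossPairs G ↑S ↑T : ℝ) / T.card ≤ c) :
    (a + b - Real.sqrt ((a - b) ^ 2 + 4 * c ^ 2)) / 2 < lambda2 G := by
  have hA : (G.adjMatrix ℝ).IsHermitian := adjMatrix_isHermitian G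
  set A := G.adjMatrix ℝ with hAdef
  set s : ℝ := (S.card : ℝ) with hsdef
  set t : ℝ := (T.card : ℝ) with htdef
  have hs : 0 < s := by rw [hsdef]; exact_mod_cast Finset.card_pos.mpr hS
  have ht : 0 < t := by rw [htdef]; exact_mod_cast Finset.card_pos.mpr hT
  set NS : ℝ := (crossPairs G ↑S ↑S : ℝ) with hNSdef
  set NT : ℝ := (crossPairs G ↑T ↑T : ℝ) with hNTdef
  set NST : ℝ := (crossPairs G ↑S ↑T : ℝ) with hNSTdef
  have hNSTnn : 0 ≤ NST := Nat.cast_nonneg _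
  set u : V → ℝ := fun i => if i ∈ S then (1:ℝ) else 0 with hudef
  set v : V → ℝ := fun i => if i ∈ T then (1:ℝ) else 0 with hvdef
  have huAu : u ⬝ᵥ (A *ᵥ u) = NS := by
    rw [hudef, hAdef, aux_crossPairs_dot G S S, hNSdef, aux_crossPairs_card G S S]
  have huAv : u ⬝ᵥ (A *ᵥ v) = NST := by
    rw [hudef, hvdef, hAdef, aux_crossPairs_dot G S T, hNSTdef, aux_crossPairs_card G S T]
  have hvAv : v ⬝ᵥ (A *ᵥ v) = NT := by
    rw [hvdef, hAdef, aux_crossPairs_dot G T T, hNTdef, aux_crossPairs_card G T T]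
  have hsymm : ∀ x z : V → ℝ, x ⬝ᵥ (A *ᵥ z) = z ⬝ᵥ (A *ᵥ x) := by
    intro x z
    rw [Matrix.dotProduct_mulVec, ← Matrix.mulVec_transpose]
    have hAT : Aᵀ = A := G.transpose_adjMatrix
    rw [hAT, dotProduct_comm]
  have hvAu : v ⬝ᵥ (A *ᵥ u) = NST := by rw [hsymm v u, huAv]
  have huu : u ⬝ᵥ u = s := by
    rw [dotProduct]
    have hterm : ∀ i, u i * u i = if i ∈ S then (1:ℝ) else 0 := by
      intro i; by_cases h : i ∈ S <;> simp [hudef, h]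
    rw [Finset.sum_congr rfl fun i _ => hterm i, Finset.sum_ite_mem, Finset.univ_inter,
      Finset.sum_const, hsdef]
    simp
  have hvv : v ⬝ᵥ v = t := by
    rw [dotProduct]
    have hterm : ∀ i, v i * v i = if i ∈ T then (1:ℝ) else 0 := by
      intro i; by_cases h : i ∈ T <;> simp [hvdef, h]
    rw [Finset.sum_congr rfl fun i _ => hterm i, Finset.sum_ite_mem, Finset.univ_inter,
      Finset.sum_const, htdef]
    simp
  have huv : u ⬝ᵥ v = 0 := by
    rw [dotProduct]
    apply Finset.sum_eq_zero
    intro i _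
    by_cases h : i ∈ S
    · have h' : i ∉ T := Finset.disjoint_left.mp hST h
      simp [hudef, hvdef, h, h']
    · simp [hudef, h]
  have hvu : v ⬝ᵥ u = 0 := by rw [dotProduct_comm]; exact huv
  obtain ⟨i0, -, hi0⟩ := Finset.exists_max_image Finset.univ hA.eigenvalues
    ⟨hS.choose, Finset.mem_univ _⟩
  obtain ⟨α, β, hαβ, horth⟩ : ∃ α β : ℝ, ¬(α = 0 ∧ β = 0) ∧
      ((star (hA.eigenvectorUnitary : Matrix V V ℝ)) *ᵥ (α • u + β • v)) i0 = 0 := by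
    by_cases hpq : ((star (hA.eigenvectorUnitary : Matrix V V ℝ)) *ᵥ u) i0 = 0 ∧
        ((star (hA.eigenvectorUnitary : Matrix V V ℝ)) *ᵥ v) i0 = 0
    · refine ⟨1, 0, by simp, ?_⟩
      rw [Matrix.mulVec_add, Matrix.mulVec_smul, Matrix.mulVec_smul]
      simp [hpq.1, hpq.2]
    · refine ⟨((star (hA.eigenvectorUnitary : Matrix V V ℝ)) *ᵥ v) i0,
        -(((star (hA.eigenvectorUnitary : Matrix V V ℝ)) *ᵥ u) i0), ?_, ?_⟩
      · rintro ⟨hq, hp⟩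
        exact hpq ⟨neg_eq_zero.mp hp, hq⟩
      · rw [Matrix.mulVec_add, Matrix.mulVec_smul, Matrix.mulVec_smul]
        simp only [Pi.add_apply, Pi.smul_apply, smul_eq_mul]
        ring
  set w : V → ℝ := α • u + β • v with hwdef
  have hww : w ⬝ᵥ w = α^2 * s + β^2 * t := by
    rw [hwdef]
    simp only [add_dotProduct, dotProduct_add, smul_dotProduct,
      dotProduct_smul, smul_eq_mul, huu, hvv, huv, hvu]
    ring
  have hwAw : w ⬝ᵥ (A *ᵥ w) = α^2 * NS + 2*α*β*NST + β^2 * NT := by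
    rw [hwdef]
    simp only [Matrix.mulVec_add, Matrix.mulVec_smul, add_dotProduct,
      dotProduct_add, smul_dotProduct, dotProduct_smul, smul_eq_mul,
      huAu, huAv, hvAu, hvAv]
    ring
  have hXpos : 0 < α^2 * s + β^2 * t := by
    rcases not_and_or.mp hαβ with h | h
    · have h2' : 0 < α^2 := by
        have hp := pow_pos (abs_pos.mpr h) 2
        rwa [sq_abs] at hp
      exact add_pos_of_pos_of_nonneg (mul_pos h2' hs) (mul_nonneg (sq_nonneg β) ht.le)
    · have h2' : 0 < β^2 := by
        have hp := pow_pos (abs_pos.mpr h) 2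
        rwa [sq_abs] at hp
      exact add_pos_of_nonneg_of_pos (mul_nonneg (sq_nonneg α) hs.le) (mul_pos h2' ht)
  -- second eigenvalue bound
  have hcard2 : 2 ≤ Fintype.card V := by
    have hsub := Finset.card_le_card (Finset.subset_univ (S ∪ T))
    rw [Finset.card_union_of_disjoint hST, Finset.card_univ] at hsub
    have h1' : 1 ≤ S.card := Finset.card_pos.mpr hS
    have h2' : 1 ≤ T.card := Finset.card_pos.mpr hT
    omega
  have hAEeq : adjEigenvalues G = Finset.univ.val.map hA.eigenvalues := rfl
  have hmcard : (adjEigenvalues G).card = Fintype.card V := by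
    rw [hAEeq, Multiset.card_map]; rfl
  have hlam2 : lambda2 G = ((adjEigenvalues G).sort (· ≤ ·)).getD ((adjEigenvalues G).card - 2) 0 := by
    rw [lambda2, hmcard]
  have hfilter := aux_filter_sort_card (adjEigenvalues G) (by rw [hmcard]; exact hcard2)
  rw [← hlam2] at hfilter
  have hμL : ∀ i, i ≠ i0 → hA.eigenvalues i ≤ lambda2 G := by
    intro i hi
    by_contra hlt
    push_neg at hlt
    have hi0' : lambda2 G < hA.eigenvalues i0 := lt_of_lt_of_le hlt (hi0 i (Finset.mem_univ i))
    have hsub : ({i, i0} : Finset V) ⊆ Finset.univ.filter (fun j => lambda2 G < hA.eigenvalues j) := by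
      intro j hj
      simp only [Finset.mem_insert, Finset.mem_singleton] at hj
      rcases hj with rfl | rfl
      · exact Finset.mem_filter.mpr ⟨Finset.mem_univ _, hlt⟩
      · exact Finset.mem_filter.mpr ⟨Finset.mem_univ _, hi0'⟩
    have hc2 : 2 ≤ (Finset.univ.filter (fun j => lambda2 G < hA.eigenvalues j)).card := by
      have hcc := Finset.card_le_card hsub
      rwa [Finset.card_insert_of_notMem (by simpa using hi), Finset.card_singleton] at hcc
    have heq : (Multiset.filter (fun x => lambda2 G < x) (adjEigenvalues G)).card
        = (Finset.univ.filter (fun j => lambda2 G < hA.eigenvalues j)).card := by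
      rw [hAEeq, Multiset.filter_map]
      simp [Finset.card, Function.comp]
    omega
  obtain ⟨hQ, hN⟩ := aux_spec_decomp A hA w
  have hupper : w ⬝ᵥ (A *ᵥ w) ≤ lambda2 G * (w ⬝ᵥ w) := by
    rw [hQ, hN, Finset.mul_sum]
    apply Finset.sum_le_sum
    intro i _
    by_cases h : i = i0
    · subst h
      rw [horth]
      simp
    · exact mul_le_mul_of_nonneg_right (hμL i h) (sq_nonneg _)
  -- lower bound via the quotient quadratic form
  have hf0 : 0 ≤ NST / Real.sqrt (s*t) := by positivity
  have hfc : NST / Real.sqrt (s*t) ≤ c := by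
    rw [div_le_iff₀ (Real.sqrt_pos.mpr (by positivity))]
    have h3' : NST ≤ c * s := by rwa [div_le_iff₀ hs] at h3
    have h4' : NST ≤ c * t := by rwa [div_le_iff₀ ht] at h4
    nlinarith [Real.sq_sqrt (mul_nonneg hs.le ht.le), Real.sqrt_nonneg (s*t),
      mul_pos hc (Real.sqrt_pos.mpr (show (0:ℝ) < s*t by positivity))]
  have hEq1 : (α*Real.sqrt s)^2 + (β*Real.sqrt t)^2 = α^2*s + β^2*t := by
    rw [mul_pow, mul_pow, Real.sq_sqrt hs.le, Real.sq_sqrt ht.le]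
  have hXpos' : 0 < (α*Real.sqrt s)^2 + (β*Real.sqrt t)^2 := by rw [hEq1]; exact hXpos
  have hkey := aux_key_ineq a b c (NS/s) (NT/t) (NST/Real.sqrt (s*t))
    (α*Real.sqrt s) (β*Real.sqrt t) ha hb hc
    (by rwa [hsdef, hNSdef] at h1) (by rwa [htdef, hNTdef] at h2) hf0 hfc hXpos'
  have hst : Real.sqrt (s*t) = Real.sqrt s * Real.sqrt t := Real.sqrt_mul hs.le t
  have hmid : 2*(NST / Real.sqrt (s*t)) * (α * Real.sqrt s) * (β * Real.sqrt t)
      = 2*(α*β*NST) := by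
    rw [hst]
    have hss : Real.sqrt s ≠ 0 := by positivity
    have hts : Real.sqrt t ≠ 0 := by positivity
    field_simp
  have hEq2 : (NS/s)*(α*Real.sqrt s)^2 + 2*(NST/Real.sqrt (s*t))*(α*Real.sqrt s)*(β*Real.sqrt t)
      + (NT/t)*(β*Real.sqrt t)^2 = α^2*NS + 2*α*β*NST + β^2*NT := by
    rw [mul_pow, mul_pow, Real.sq_sqrt hs.le, Real.sq_sqrt ht.le, hmid]
    field_simp
  rw [hEq1, hEq2] at hkey
  have hchain : (a + b - Real.sqrt ((a-b)^2 + 4*c^2)) / 2 * (α^2*s + β^2*t)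
      < lambda2 G * (α^2*s + β^2*t) := by
    calc (a + b - Real.sqrt ((a-b)^2 + 4*c^2)) / 2 * (α^2*s + β^2*t)
        < α^2*NS + 2*α*β*NST + β^2*NT := hkey
    _ = w ⬝ᵥ (A *ᵥ w) := hwAw.symm
    _ ≤ lambda2 G * (w ⬝ᵥ w) := hupper
    _ = lambda2 G * (α^2*s + β^2*t) := by rw [hww]
  exact (mul_lt_mul_iff_of_pos_right hXpos).mp hchain

/-- **Lemma (quotient-matrix eigenvalue bound).**
Let `F` be the subgraph of `G` induced on the union of nonempty disjoint vertex sets `S` and `T`.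
(Since `F` is induced, edge counts inside `S`, inside `T`, and between `S` and `T` are the same
in `F` and in `G`; here `crossPairs G ↑S ↑S = 2·e(F[S])`, `crossPairs G ↑T ↑T = 2·e(F[T])` and
`crossPairs G ↑S ↑T = e_F(S,T)`.)
If `2·e(F[S])/|S| > a`, `2·e(F[T])/|T| ≥ b`, `e_F(S,T)/|S| ≤ c` and `e_F(S,T)/|T| ≤ c`, where
`a, b ≥ 0` and `c > 0`, then `λ₂(G) > (a + b - √((a - b)² + 4c²))/2`. -/
theorem lambda2_lower_bound_of_partition {V : Type*} [Fintype V] (G : SimpleGraph V)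
    (S T : Finset V) (hS : S.Nonempty) (hT : T.Nonempty) (hST : Disjoint S T)
    (a b c : ℝ) (ha : 0 ≤ a) (hb : 0 ≤ b) (hc : 0 < c)
    (h1 : a < (crossPairs G ↑S ↑S : ℝ) / S.card)
    (h2 : b ≤ (crossPairs G ↑T ↑T : ℝ) / T.card)
    (h3 : (crossPairs G ↑S ↑T : ℝ) / S.card ≤ c)
    (h4 : (crossPairs G ↑S ↑T : ℝ) / T.card ≤ c) :
    (a + b - Real.sqrt ((a - b) ^ 2 + 4 * c ^ 2)) / 2 < lambda2 G :=
  aux_main G S T hS hT hST a b c ha hb hc h1 h2 h3 h4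
end

section
/- Let G be a d-regular graph with d ≥ 3, and let U be a subset of V(G) with |U| ≥ d + 1 and |V(G) ∖ U| ≥ d + 1. If the number of edges between U and V(G) ∖ U is at most d − 1, then λ₂(G) ≥ d − 2(d−1)/(d+1); in particular λ₂(G) > d − 2. -/
lemma sorted_getD_of_two_ge (s : Multiset ℝ) (r : ℝ) (n : ℕ) (hn : s.card = n) (h2 : 2 ≤ n)
    (hf : 2 ≤ Multiset.card (s.filter (r ≤ ·))) :
    r ≤ (s.sort (· ≤ ·)).getD (n - 2) 0 := by
  by_contra hlt
  push_neg at hlt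
  set l := s.sort (· ≤ ·) with hl
  have hlen : l.length = n := by rw [hl, Multiset.length_sort, hn]
  have hsorted : l.Pairwise (· ≤ ·) := Multiset.pairwise_sort s _
  have hidx : n - 2 < l.length := by omega
  have hgetD : l.getD (n - 2) 0 = l[n - 2] := List.getD_eq_getElem l 0 hidx
  rw [hgetD] at hlt
  have hpw := List.pairwise_iff_getElem.mp hsorted
  -- every element of l.take (n-1) is < r
  have htake : ∀ x ∈ l.take (n - 1), ¬ (r ≤ x) := by
    intro x hx
    obtain ⟨j, hj, hxj⟩ := List.mem_iff_getElem.mp hx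
    have hjlt : j < n - 1 := by
      have := List.length_take (l := l) (i := n - 1); omega
    have hjl : j < l.length := by omega
    have hxeq : x = l[j] := by rw [← hxj, List.getElem_take]
    have hle : l[j] ≤ l[n - 2] := by
      rcases lt_or_eq_of_le (show j ≤ n - 2 by omega) with h | h
      · exact hpw j (n-2) hjl hidx h
      · exact le_of_eq (by congr)
    push_neg
    calc x = l[j] := hxeq
    _ ≤ l[n-2] := hle
    _ < r := hlt
  -- count of elements ≥ r is at most 1
  have hsl : (l : Multiset ℝ) = s := Multiset.sort_eq s _
  have hcnt : Multiset.card (s.filter (r ≤ ·)) = (l.filter (fun x => decide (r ≤ x))).length := by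
    rw [← hsl]
    simp [Multiset.filter_coe]
  have hsplit : l = l.take (n-1) ++ l.drop (n-1) := (List.take_append_drop _ _).symm
  have hfn : (l.take (n-1)).filter (fun x => decide (r ≤ x)) = [] := by
    rw [List.filter_eq_nil_iff]
    intro x hx
    simpa using htake x hx
  have hlen2 : ((l.filter (fun x => decide (r ≤ x)))).length ≤ 1 := by
    conv_lhs => rw [hsplit]
    rw [List.filter_append, hfn, List.nil_append]
    calc ((l.drop (n-1)).filter _).length ≤ (l.drop (n-1)).length := List.length_filter_le _ _
    _ = l.length - (n-1) := List.length_drop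
    _ ≤ 1 := by omega
  omega

open Finset Matrix in
lemma two_eigenvalues_ge {V : Type*} [Fintype V] [DecidableEq V] [Nonempty V]
    (A : Matrix V V ℝ) (hA : A.IsHermitian) (r : ℝ)
    (h : ∀ v : V → ℝ, ∃ z : V → ℝ, v ⬝ᵥ z = 0 ∧ z ⬝ᵥ z ≠ 0 ∧ r * (z ⬝ᵥ z) ≤ z ⬝ᵥ (A *ᵥ z)) :
    2 ≤ Multiset.card ((Finset.univ.val.map hA.eigenvalues).filter (r ≤ ·)) := by
  set μ := hA.eigenvalues with hμ
  obtain ⟨i₀, -, hmax⟩ := Finset.exists_max_image Finset.univ μ ⟨Classical.arbitrary V, Finset.mem_univ _⟩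
  obtain ⟨z, hvz, hzz0, hray⟩ := h (⇑(hA.eigenvectorBasis i₀))
  set U₀ := (hA.eigenvectorUnitary : Matrix V V ℝ) with hU₀
  have hstar : star U₀ = U₀ᵀ := by
    ext i j
    simp [Matrix.conjTranspose_apply]
  set w := U₀ᵀ *ᵥ z with hw
  have hUU : U₀ * U₀ᵀ = 1 := by
    rw [← hstar]; exact (Matrix.mem_unitaryGroup_iff).mp hA.eigenvectorUnitary.2
  have hDiag : A = U₀ * Matrix.diagonal μ * U₀ᵀ := by
    rw [← hstar]
    have := hA.spectral_theorem
    simpa using this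
  -- w i₀ = 0
  have hw0 : w i₀ = 0 := by
    rw [← hvz]
    simp only [hw, Matrix.mulVec, dotProduct, Matrix.transpose_apply]
    rfl
  -- z ⬝ᵥ A z = ∑ μ i * w i ^ 2
  have hAz : z ⬝ᵥ (A *ᵥ z) = ∑ i, μ i * (w i)^2 := by
    conv_lhs => rw [hDiag]
    rw [← Matrix.mulVec_mulVec, ← Matrix.mulVec_mulVec, Matrix.dotProduct_mulVec,
      ← Matrix.mulVec_transpose]
    simp only [dotProduct, Matrix.mulVec_diagonal, ← hw]
    exact Finset.sum_congr rfl fun i _ => by ring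
  -- z ⬝ᵥ z = ∑ w i ^ 2
  have hzz : z ⬝ᵥ z = ∑ i, (w i)^2 := by
    have h1 : z ⬝ᵥ z = w ⬝ᵥ w := by
      rw [hw, Matrix.dotProduct_mulVec, ← Matrix.mulVec_transpose, Matrix.transpose_transpose,
        Matrix.mulVec_mulVec, hUU, Matrix.one_mulVec]
    rw [h1]
    simp only [dotProduct]
    exact Finset.sum_congr rfl fun i _ => (sq (w i)).symm
  -- positivity
  have hzpos : 0 < ∑ i, (w i)^2 := by
    rcases lt_or_eq_of_le (Finset.sum_nonneg fun i _ => sq_nonneg (w i)) with h' | h'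
    · exact h'
    · exact absurd (hzz.trans h'.symm) hzz0
  obtain ⟨j, -, hj⟩ : ∃ j ∈ Finset.univ, (w j)^2 ≠ 0 := by
    by_contra hc
    push_neg at hc
    rw [Finset.sum_eq_zero (fun i hi => hc i hi)] at hzpos
    exact lt_irrefl 0 hzpos
  have hji : j ≠ i₀ := fun hji => hj (by rw [hji, hw0]; ring)
  -- second eigenvalue is ≥ r
  have hsec : ∃ i, i ≠ i₀ ∧ r ≤ μ i := by
    by_contra hc
    push_neg at hc
    have hlt : ∑ i, μ i * (w i)^2 < ∑ i, r * (w i)^2 := by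
      refine Finset.sum_lt_sum (fun i _ => ?_) ⟨j, Finset.mem_univ j, ?_⟩
      · rcases eq_or_ne i i₀ with rfl | hne
        · rw [hw0]; ring_nf; exact le_refl _
        · exact mul_le_mul_of_nonneg_right (le_of_lt (hc i hne)) (sq_nonneg _)
      · exact mul_lt_mul_of_pos_right (hc j hji) (lt_of_le_of_ne (sq_nonneg _) (Ne.symm hj))
    rw [← Finset.mul_sum] at hlt
    rw [hAz, hzz] at hray
    exact absurd hray (not_le.mpr hlt)
  obtain ⟨i, hii₀, hi⟩ := hsec
  have hi₀ : r ≤ μ i₀ := hi.trans (hmax i (Finset.mem_univ i))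
  -- count
  have hsub : ({i₀, i} : Finset V) ⊆ Finset.univ.filter (fun k => r ≤ μ k) := by
    intro k hk
    rw [Finset.mem_insert, Finset.mem_singleton] at hk
    rcases hk with rfl | rfl <;> simp [hi₀, hi]
  have hcard : 2 ≤ (Finset.univ.filter (fun k => r ≤ μ k)).card := by
    have := Finset.card_le_card hsub
    rwa [Finset.card_pair (Ne.symm hii₀)] at this
  have : Multiset.card ((Finset.univ.val.map μ).filter (r ≤ ·))
      = (Finset.univ.filter (fun k => r ≤ μ k)).card := by
    simp [Finset.card, Finset.filter_val, ← Multiset.countP_eq_card_filter, Multiset.countP_map]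
  omega


open Finset Matrix in
lemma crossPairs_eq_sum {V : Type*} [Fintype V] [DecidableEq V] (G : SimpleGraph V)
    [DecidableRel G.Adj] (A : Matrix V V ℝ) (hadj : ∀ i j, A i j = if G.Adj i j then 1 else 0)
    (X Y : Finset V) :
    ((crossPairs G ↑X ↑Y : ℕ) : ℝ) = ∑ u ∈ X, ∑ v ∈ Y, A u v := by
  have h1 : {p : V × V | p.1 ∈ (↑X : Set V) ∧ p.2 ∈ (↑Y : Set V) ∧ G.Adj p.1 p.2}
      = ↑((X ×ˢ Y).filter fun p => G.Adj p.1 p.2) := by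
    ext p
    simp [Finset.mem_product, and_assoc]
  rw [crossPairs, h1, Set.ncard_coe_finset, ← Finset.sum_boole, Finset.sum_product]
  exact Finset.sum_congr rfl fun u _ => Finset.sum_congr rfl fun v _ => (hadj u v).symm

set_option maxHeartbeats 1000000 in
open Finset Matrix in
lemma rayleigh_exists {V : Type*} [Fintype V] [DecidableEq V] (G : SimpleGraph V)
    [DecidableRel G.Adj] (A : Matrix V V ℝ) (hadj : ∀ i j, A i j = if G.Adj i j then 1 else 0)
    (d : ℕ) (hd : 3 ≤ d) (hreg : G.IsRegularOfDegree d) (U : Finset V)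
    (hU : d + 1 ≤ U.card) (hUc : d + 1 ≤ Uᶜ.card)
    (hcut : crossPairs G ↑U (↑U : Set V)ᶜ ≤ d - 1) (v : V → ℝ) :
    ∃ z : V → ℝ, v ⬝ᵥ z = 0 ∧ z ⬝ᵥ z ≠ 0 ∧
      ((d:ℝ) - 2*((d:ℝ)-1)/((d:ℝ)+1)) * (z ⬝ᵥ z) ≤ z ⬝ᵥ (A *ᵥ z) := by
  have hD3 : (3:ℝ) ≤ (d:ℝ) := by exact_mod_cast hd
  -- symmetry of A
  have hAsymm : ∀ i j, A i j = A j i := by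
    intro i j; rw [hadj, hadj]
    simp [SimpleGraph.adj_comm]
  -- row sums
  have hrow : ∀ u, ∑ w, A u w = (d:ℝ) := by
    intro u
    have h' : ∑ w, A u w = ((Finset.univ.filter (G.Adj u)).card : ℝ) := by
      rw [← Finset.sum_boole]
      exact Finset.sum_congr rfl fun w _ => hadj u w
    rw [h']
    have h'' : Finset.univ.filter (G.Adj u) = G.neighborFinset u := by
      ext x; simp [SimpleGraph.mem_neighborFinset]
    rw [h'']
    have := hreg u
    rw [SimpleGraph.degree] at this
    rw [this]
  -- cross pair values
  set cUU : ℝ := ((crossPairs G ↑U ↑U : ℕ) : ℝ) with hcUU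
  set c : ℝ := ((crossPairs G ↑U ((↑U : Set V)ᶜ) : ℕ) : ℝ) with hc
  set cc : ℝ := ((crossPairs G ↑Uᶜ ↑Uᶜ : ℕ) : ℝ) with hcc
  have hcompl : ((↑U : Set V)ᶜ) = (↑(Uᶜ : Finset V) : Set V) := by
    rw [Finset.coe_compl]
  have hS : ∀ X Y : Finset V, ∑ u ∈ X, ∑ w ∈ Y, A u w = ((crossPairs G ↑X ↑Y : ℕ) : ℝ) :=
    fun X Y => (crossPairs_eq_sum G A hadj X Y).symm
  have hSUU : ∑ u ∈ U, ∑ w ∈ U, A u w = cUU := by rw [hS, hcUU]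
  have hSUcUc : ∑ u ∈ Uᶜ, ∑ w ∈ Uᶜ, A u w = cc := by rw [hS, hcc]
  have hcUUc : ∑ u ∈ U, ∑ w ∈ Uᶜ, A u w = c := by
    rw [hS, hc, hcompl]
  have hcUcU : ∑ u ∈ Uᶜ, ∑ w ∈ U, A u w = c := by
    rw [← hcUUc]; refine Finset.sum_comm.trans ?_
    exact Finset.sum_congr rfl fun u _ => Finset.sum_congr rfl fun w _ => (hAsymm w u)
  -- row sum splits
  have hsplitsum : ∀ u, ∑ w ∈ U, A u w + ∑ w ∈ Uᶜ, A u w = (d:ℝ) := by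
    intro u
    rw [Finset.sum_add_sum_compl]
    exact hrow u
  have h1 : cUU + c = (d:ℝ) * U.card := by
    rw [← hSUU, ← hcUUc, ← Finset.sum_add_distrib]
    rw [Finset.sum_congr rfl fun u _ => hsplitsum u, Finset.sum_const, nsmul_eq_mul, mul_comm]
  have h2 : cc + c = (d:ℝ) * (Uᶜ.card : ℝ) := by
    rw [← hSUcUc, ← hcUcU]
    rw [show (∑ u ∈ Uᶜ, ∑ w ∈ Uᶜ, A u w) + ∑ u ∈ Uᶜ, ∑ w ∈ U, A u w
        = ∑ u ∈ Uᶜ, (∑ w ∈ U, A u w + ∑ w ∈ Uᶜ, A u w) by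
      rw [Finset.sum_add_distrib]; ring]
    rw [Finset.sum_congr rfl fun u _ => hsplitsum u, Finset.sum_const, nsmul_eq_mul, mul_comm]
  -- bounds
  have hcb : c ≤ (d:ℝ) - 1 := by
    rw [hc]
    have h' : ((crossPairs G ↑U ((↑U : Set V)ᶜ) : ℕ) : ℝ) ≤ ((d - 1 : ℕ) : ℝ) := by
      exact_mod_cast hcut
    rw [Nat.cast_sub (by omega)] at h'
    simpa using h'
  have hc0 : (0:ℝ) ≤ c := by rw [hc]; positivity
  have hmU : (d:ℝ) + 1 ≤ (U.card : ℝ) := by exact_mod_cast hU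
  have hmc : (d:ℝ) + 1 ≤ (Uᶜ.card : ℝ) := by exact_mod_cast hUc
  clear_value cUU c cc
  -- choose a, b
  set P : ℝ := ∑ x ∈ U, v x with hP
  set Q : ℝ := ∑ x ∈ Uᶜ, v x with hQ
  obtain ⟨a, b, hab, hortho⟩ : ∃ a b : ℝ, ¬(a = 0 ∧ b = 0) ∧ a * P + b * Q = 0 := by
    by_cases hq : P = 0 ∧ Q = 0
    · exact ⟨1, 0, by simp, by simp [hq.1, hq.2]⟩
    · refine ⟨Q, -P, ?_, by ring⟩
      intro ⟨h1', h2'⟩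
      exact hq ⟨by simpa using h2', h1'⟩
  clear_value P Q
  set z : V → ℝ := fun x => if x ∈ U then a else b with hz
  have hzU : ∀ x ∈ U, z x = a := fun x hx => by rw [hz]; simp [hx]
  have hzUc : ∀ x ∈ Uᶜ, z x = b := fun x hx => by
    rw [hz]; simp [Finset.mem_compl.mp hx]
  -- z ⬝ᵥ z value
  have hzz : z ⬝ᵥ z = a^2 * (U.card : ℝ) + b^2 * (Uᶜ.card : ℝ) := by
    rw [dotProduct, ← Finset.sum_add_sum_compl U]
    congr 1
    · rw [Finset.sum_congr rfl fun x hx => by rw [hzU x hx], Finset.sum_const, nsmul_eq_mul]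
      ring
    · rw [Finset.sum_congr rfl fun x hx => by rw [hzUc x hx], Finset.sum_const, nsmul_eq_mul]
      ring
  -- quadratic form value
  have hquad : z ⬝ᵥ (A *ᵥ z) = a^2 * cUU + a*b*c + a*b*c + b^2 * cc := by
    have expand : z ⬝ᵥ (A *ᵥ z) = ∑ u, ∑ w, z u * A u w * z w := by
      rw [dotProduct]
      refine Finset.sum_congr rfl fun u _ => ?_
      rw [Matrix.mulVec, dotProduct, Finset.mul_sum]
      exact Finset.sum_congr rfl fun w _ => by ring
    have inner_split : ∀ (u : V), ∑ w, z u * A u w * z w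
        = a * (∑ w ∈ U, z u * A u w) + b * (∑ w ∈ Uᶜ, z u * A u w) := by
      intro u
      rw [← Finset.sum_add_sum_compl U (fun w => z u * A u w * z w), Finset.mul_sum,
        Finset.mul_sum]
      congr 1
      · exact Finset.sum_congr rfl fun w hw => by rw [hzU w hw]; ring
      · exact Finset.sum_congr rfl fun w hw => by rw [hzUc w hw]; ring
    rw [expand, Finset.sum_congr rfl fun u _ => inner_split u, Finset.sum_add_distrib,
      ← Finset.mul_sum, ← Finset.mul_sum,
      ← Finset.sum_add_sum_compl U (fun u => ∑ w ∈ U, z u * A u w),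
      ← Finset.sum_add_sum_compl U (fun u => ∑ w ∈ Uᶜ, z u * A u w)]
    have e1 : ∑ u ∈ U, ∑ w ∈ U, z u * A u w = a * cUU := by
      rw [← hSUU, Finset.mul_sum]
      exact Finset.sum_congr rfl fun u hu => by
        rw [Finset.mul_sum]; exact Finset.sum_congr rfl fun w _ => by rw [hzU u hu]
    have e2 : ∑ u ∈ Uᶜ, ∑ w ∈ U, z u * A u w = b * c := by
      rw [← hcUcU, Finset.mul_sum]
      exact Finset.sum_congr rfl fun u hu => by
        rw [Finset.mul_sum]; exact Finset.sum_congr rfl fun w _ => by rw [hzUc u hu]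
    have e3 : ∑ u ∈ U, ∑ w ∈ Uᶜ, z u * A u w = a * c := by
      rw [← hcUUc, Finset.mul_sum]
      exact Finset.sum_congr rfl fun u hu => by
        rw [Finset.mul_sum]; exact Finset.sum_congr rfl fun w _ => by rw [hzU u hu]
    have e4 : ∑ u ∈ Uᶜ, ∑ w ∈ Uᶜ, z u * A u w = b * cc := by
      rw [← hSUcUc, Finset.mul_sum]
      exact Finset.sum_congr rfl fun u hu => by
        rw [Finset.mul_sum]; exact Finset.sum_congr rfl fun w _ => by rw [hzUc u hu]
    rw [e1, e2, e3, e4]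
    ring
  refine ⟨z, ?_, ?_, ?_⟩
  · -- orthogonality
    have : v ⬝ᵥ z = a * P + b * Q := by
      rw [dotProduct, ← Finset.sum_add_sum_compl U]
      congr 1
      · rw [hP, Finset.mul_sum]
        exact Finset.sum_congr rfl fun x hx => by rw [hzU x hx]; ring
      · rw [hQ, Finset.mul_sum]
        exact Finset.sum_congr rfl fun x hx => by rw [hzUc x hx]; ring
    rw [this, hortho]
  · -- nonzero
    rw [hzz]
    rcases not_and_or.mp hab with ha | hb
    · have ha2 : 0 < a^2 := lt_of_le_of_ne (sq_nonneg a) (Ne.symm (pow_ne_zero 2 ha))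
      nlinarith [sq_nonneg b, mul_le_mul_of_nonneg_left hmU (le_of_lt ha2),
        mul_le_mul_of_nonneg_left hmc (sq_nonneg b)]
    · have hb2 : 0 < b^2 := lt_of_le_of_ne (sq_nonneg b) (Ne.symm (pow_ne_zero 2 hb))
      nlinarith [sq_nonneg a, mul_le_mul_of_nonneg_left hmc (le_of_lt hb2),
        mul_le_mul_of_nonneg_left hmU (sq_nonneg a)]
  · -- Rayleigh bound
    rw [hzz, hquad]
    clear_value z
    set S : ℝ := a^2 * (U.card : ℝ) + b^2 * (Uᶜ.card : ℝ) with hSdef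
    clear_value S
    have hexp : a^2 * cUU + a*b*c + a*b*c + b^2 * cc = (d:ℝ) * S - c * (a-b)^2 := by
      rw [hSdef]
      linear_combination a^2 * h1 + b^2 * h2
    rw [hexp]
    have hkey : c * (a-b)^2 * ((d:ℝ)+1) ≤ 2*((d:ℝ)-1) * S := by
      rw [hSdef]
      clear hSdef
      have step1 : (a-b)^2 ≤ 2*(a^2+b^2) := by nlinarith [sq_nonneg (a+b)]
      have t1 : c*(a-b)^2 ≤ ((d:ℝ)-1)*(2*(a^2+b^2)) :=
        mul_le_mul hcb step1 (sq_nonneg _) (by linarith)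
      have t2 : c*(a-b)^2*((d:ℝ)+1) ≤ ((d:ℝ)-1)*(2*(a^2+b^2))*((d:ℝ)+1) :=
        mul_le_mul_of_nonneg_right t1 (by linarith)
      have t3 : ((d:ℝ)-1)*(2*(a^2+b^2))*((d:ℝ)+1)
          = 2*((d:ℝ)-1)*(a^2*((d:ℝ)+1) + b^2*((d:ℝ)+1)) := by ring
      have t4 : a^2*((d:ℝ)+1) + b^2*((d:ℝ)+1) ≤ a^2*(U.card:ℝ) + b^2*(Uᶜ.card:ℝ) :=
        add_le_add (mul_le_mul_of_nonneg_left hmU (sq_nonneg a))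
          (mul_le_mul_of_nonneg_left hmc (sq_nonneg b))
      have t5 : 2*((d:ℝ)-1)*(a^2*((d:ℝ)+1) + b^2*((d:ℝ)+1))
          ≤ 2*((d:ℝ)-1)*(a^2*(U.card:ℝ) + b^2*(Uᶜ.card:ℝ)) :=
        mul_le_mul_of_nonneg_left t4 (by linarith)
      linarith
    have hdiv : c * (a-b)^2 ≤ 2*((d:ℝ)-1)/((d:ℝ)+1) * S := by
      rw [div_mul_eq_mul_div, le_div_iff₀ (by linarith : (0:ℝ) < (d:ℝ)+1)]
      exact hkey
    have hring : ((d:ℝ) - 2*((d:ℝ)-1)/((d:ℝ)+1)) * S = (d:ℝ)*S - 2*((d:ℝ)-1)/((d:ℝ)+1) * S := by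
      ring
    linarith [hdiv, hring.le]
/-- If `G` is a `d`-regular graph (`d ≥ 3`) and `U` is a vertex subset with `|U| ≥ d + 1` and
`|V(G) \ U| ≥ d + 1` such that at most `d - 1` edges join `U` to its complement, then
`λ₂(G) ≥ d - 2(d-1)/(d+1)`; in particular `λ₂(G) > d - 2`. -/
theorem lambda2_of_small_edge_cut {V : Type*} [Fintype V] (G : SimpleGraph V)
    [DecidableRel G.Adj]
    (d : ℕ) (hd : 3 ≤ d) (hreg : G.IsRegularOfDegree d) (U : Finset V)
    (hU : d + 1 ≤ U.card) (hUc : d + 1 ≤ (↑U : Set V)ᶜ.ncard)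
    (hcut : crossPairs G ↑U (↑U : Set V)ᶜ ≤ d - 1) :
    (d : ℝ) - 2 * ((d : ℝ) - 1) / ((d : ℝ) + 1) ≤ lambda2 G ∧ (d : ℝ) - 2 < lambda2 G := by
  letI : DecidableEq V := Classical.decEq V
  have hUc' : d + 1 ≤ (Uᶜ : Finset V).card := by
    rwa [← Finset.coe_compl, Set.ncard_coe_finset] at hUc
  have hcardV : 2 ≤ Fintype.card V := by
    have := Finset.card_le_univ U
    omega
  haveI : Nonempty V := by
    rw [← Fintype.card_pos_iff]
    omega
  have hd3 : (3:ℝ) ≤ (d:ℝ) := by exact_mod_cast hd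
  have hmain : (d : ℝ) - 2 * ((d : ℝ) - 1) / ((d : ℝ) + 1) ≤ lambda2 G := by
    unfold lambda2 adjEigenvalues
    refine sorted_getD_of_two_ge _ _ _ (by simp) hcardV ?_
    refine two_eigenvalues_ge _ _ _ (fun v => ?_)
    refine rayleigh_exists G _ (fun i j => ?_) d hd hreg U hU hUc' hcut v
    by_cases h : G.Adj i j <;> simp [SimpleGraph.adjMatrix_apply, h]
  refine ⟨hmain, lt_of_lt_of_le ?_ hmain⟩
  have h2 : 2 * ((d:ℝ) - 1) / ((d:ℝ) + 1) < 2 := by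
    rw [div_lt_iff₀ (by linarith : (0:ℝ) < (d:ℝ) + 1)]
    linarith
  linarith
end

section
/- For every integer d ≥ 3, the graph G_d is a connected non-bipartite d-regular graph on 3d − 1 vertices, and its toughness satisfies t(G_d) ≤ 1. -/
/-- The graph `G_d`: the disjoint union of an empty graph on `d` vertices (the `.inl` part),
an empty graph on `d-1` vertices (the `.inr (.inl _)` part) and a complete graph `K_d`
(the `.inr (.inr _)` part), where every vertex of the first part is joined to every vertex of
the second part, and a perfect matching is added between the first and third parts. -/
def Gd (d : ℕ) : SimpleGraph (Fin d ⊕ (Fin (d - 1) ⊕ Fin d)) where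
  Adj x y :=
    match x, y with
    | .inl _, .inr (.inl _) => True
    | .inr (.inl _), .inl _ => True
    | .inl a, .inr (.inr c) => (a : ℕ) = (c : ℕ)
    | .inr (.inr c), .inl a => (a : ℕ) = (c : ℕ)
    | .inr (.inr c), .inr (.inr c') => c ≠ c'
    | _, _ => False
  symm := by
    constructor
    rintro (a | b | c) (a' | b' | c') h <;> simp_all
    exact fun e => h e.symm
  loopless := by
    constructor
    rintro (a | b | c) h <;> simp_all


private lemma Gd_isolated_reachable {V : Type*} {G : SimpleGraph V} {v w : V}
    (h : ∀ x, ¬ G.Adj v x) (hr : G.Reachable v w) : v = w := by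
  obtain ⟨p⟩ := hr
  cases p with
  | nil => rfl
  | cons h' _ => exact absurd h' (h _)

open Classical in
private lemma Gd_regular (d : ℕ) (hd : 3 ≤ d) : (Gd d).IsRegularOfDegree d := by
  intro v
  rw [SimpleGraph.degree]
  match v with
  | .inl a =>
    have : (Gd d).neighborFinset (.inl a) =
        insert (Sum.inr (Sum.inr a))
          (Finset.univ.map ⟨fun b => Sum.inr (Sum.inl b), Sum.inr_injective.comp Sum.inl_injective⟩) := by
      ext x
      rcases x with a' | b | c <;> rw [SimpleGraph.mem_neighborFinset] <;>
        simp [SimpleGraph.mem_neighborFinset, Gd, Fin.val_eq_val, eq_comm, Function.Embedding.coeFn_mk]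
    rw [this, Finset.card_insert_of_notMem (by simp [Function.Embedding.coeFn_mk]), Finset.card_map, Finset.card_univ,
      Fintype.card_fin]
    omega
  | .inr (.inl b) =>
    have : (Gd d).neighborFinset (.inr (.inl b)) =
        Finset.univ.map ⟨Sum.inl, Sum.inl_injective⟩ := by
      ext x
      rcases x with a' | b' | c <;> rw [SimpleGraph.mem_neighborFinset] <;> simp [SimpleGraph.mem_neighborFinset, Gd]
    rw [this, Finset.card_map, Finset.card_univ, Fintype.card_fin]
  | .inr (.inr c) =>
    have : (Gd d).neighborFinset (.inr (.inr c)) =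
        insert (Sum.inl c)
          ((Finset.univ.erase c).map ⟨fun c' => Sum.inr (Sum.inr c'), Sum.inr_injective.comp Sum.inr_injective⟩) := by
      ext x
      rcases x with a' | b | c' <;> rw [SimpleGraph.mem_neighborFinset] <;>
        simp [SimpleGraph.mem_neighborFinset, Gd, Fin.val_eq_val, ne_comm, Function.Embedding.coeFn_mk]
    rw [this, Finset.card_insert_of_notMem (by simp), Finset.card_map,
      Finset.card_erase_of_mem (Finset.mem_univ _), Finset.card_univ, Fintype.card_fin]
    omega

private lemma Gd_connected (d : ℕ) (hd : 3 ≤ d) : (Gd d).Connected := by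
  have h0 : (0:ℕ) < d - 1 := by omega
  set hub : Fin d ⊕ (Fin (d-1) ⊕ Fin d) := Sum.inr (Sum.inl ⟨0, h0⟩) with hhub
  have key : ∀ x, (Gd d).Reachable hub x := by
    intro x
    rcases x with a | b | c
    · exact (SimpleGraph.Adj.reachable (by simp [Gd, hhub]))
    · have r1 : (Gd d).Adj hub (Sum.inl ⟨0, by omega⟩) := by simp [Gd, hhub]
      have r2 : (Gd d).Adj (Sum.inl ⟨0, by omega⟩) (Sum.inr (Sum.inl b)) := by simp [Gd]
      exact r1.reachable.trans r2.reachable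
    · have r1 : (Gd d).Adj hub (Sum.inl c) := by simp [Gd, hhub]
      have r2 : (Gd d).Adj (Sum.inl c) (Sum.inr (Sum.inr c)) := by simp [Gd]
      exact r1.reachable.trans r2.reachable
  have : Nonempty (Fin d ⊕ (Fin (d-1) ⊕ Fin d)) := ⟨hub⟩
  exact ⟨fun u v => ((key u).symm).trans (key v)⟩

private lemma Gd_not_colorable (d : ℕ) (hd : 3 ≤ d) : ¬ (Gd d).Colorable 2 := by
  rintro ⟨C⟩
  have h01 : (Gd d).Adj (Sum.inr (Sum.inr ⟨0, by omega⟩)) (Sum.inr (Sum.inr ⟨1, by omega⟩)) := by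
    simp [Gd, Fin.ext_iff]
  have h02 : (Gd d).Adj (Sum.inr (Sum.inr ⟨0, by omega⟩)) (Sum.inr (Sum.inr ⟨2, by omega⟩)) := by
    simp [Gd, Fin.ext_iff]
  have h12 : (Gd d).Adj (Sum.inr (Sum.inr ⟨1, by omega⟩)) (Sum.inr (Sum.inr ⟨2, by omega⟩)) := by
    simp [Gd, Fin.ext_iff]
  have c01 := C.valid h01
  have c02 := C.valid h02
  have c12 := C.valid h12
  rw [Fin.ne_iff_vne] at c01 c02 c12
  have := (C (Sum.inr (Sum.inr ⟨0, by omega⟩))).isLt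
  have := (C (Sum.inr (Sum.inr ⟨1, by omega⟩))).isLt
  have := (C (Sum.inr (Sum.inr ⟨2, by omega⟩))).isLt
  omega

open Classical in
private lemma Gd_tough (d : ℕ) (hd : 3 ≤ d) :
      ∃ S : Finset (Fin d ⊕ (Fin (d - 1) ⊕ Fin d)),
        (↑S : Set (Fin d ⊕ (Fin (d - 1) ⊕ Fin d))) ≠ Set.univ ∧
        2 ≤ Nat.card ((Gd d).induce (↑S : Set (Fin d ⊕ (Fin (d - 1) ⊕ Fin d)))ᶜ).ConnectedComponent ∧
        S.card ≤ Nat.card ((Gd d).induce (↑S : Set (Fin d ⊕ (Fin (d - 1) ⊕ Fin d)))ᶜ).ConnectedComponent := by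
  refine ⟨Finset.univ.map ⟨Sum.inl, Sum.inl_injective⟩, ?_, ?_, ?_⟩
  · intro h
    rw [Set.eq_univ_iff_forall] at h
    have := h (Sum.inr (Sum.inl ⟨0, by omega⟩))
    simp at this
  all_goals {
    set S : Finset (Fin d ⊕ (Fin (d - 1) ⊕ Fin d)) := Finset.univ.map ⟨Sum.inl, Sum.inl_injective⟩ with hS
    set G' := (Gd d).induce (↑S : Set (Fin d ⊕ (Fin (d - 1) ⊕ Fin d)))ᶜ with hG'
    have hmem : ∀ x : Fin (d-1) ⊕ Fin d, (Sum.inr x : Fin d ⊕ (Fin (d-1) ⊕ Fin d)) ∈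
        (↑S : Set (Fin d ⊕ (Fin (d-1) ⊕ Fin d)))ᶜ := by
      intro x; simp [hS]
    set f : Fin d → G'.ConnectedComponent := fun i =>
      G'.connectedComponentMk (if h : (i : ℕ) < d - 1
        then ⟨Sum.inr (Sum.inl ⟨i, h⟩), hmem _⟩
        else ⟨Sum.inr (Sum.inr ⟨0, by omega⟩), hmem _⟩) with hf
    have hiso : ∀ b : Fin (d-1), ∀ y, ¬ G'.Adj ⟨Sum.inr (Sum.inl b), hmem _⟩ y := by
      rintro b ⟨y, hy⟩ hadj
      have hadj' : (Gd d).Adj (Sum.inr (Sum.inl b)) y := hadj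
      rcases y with a | b' | c
      · exact hy (by simp [hS])
      · simp [Gd] at hadj'
      · simp [Gd] at hadj'
    have hinj : Function.Injective f := by
      intro i j hij
      simp only [hf] at hij
      have hr := (SimpleGraph.ConnectedComponent.eq.mp hij)
      by_cases hi : (i : ℕ) < d - 1 <;> by_cases hj : (j : ℕ) < d - 1
      · rw [dif_pos hi, dif_pos hj] at hr
        have := Gd_isolated_reachable (hiso _) hr
        simp only [Subtype.mk.injEq, Sum.inr.injEq, Sum.inl.injEq, Fin.mk.injEq] at this
        exact Fin.ext this
      · rw [dif_pos hi, dif_neg hj] at hr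
        have := Gd_isolated_reachable (hiso _) hr
        simp at this
      · rw [dif_neg hi, dif_pos hj] at hr
        have := Gd_isolated_reachable (hiso _) hr.symm
        simp at this
      · exact Fin.ext (by omega)
    have hcard : d ≤ Nat.card G'.ConnectedComponent := by
      calc d = Nat.card (Fin d) := by simp
        _ ≤ Nat.card G'.ConnectedComponent := Nat.card_le_card_of_injective f hinj
    first
    | exact le_trans (by omega) hcard
    | (rw [Finset.card_map, Finset.card_univ, Fintype.card_fin]; exact hcard)
  }

open Classical in
/-- **Properties of `G_d`.** For every integer `d ≥ 3`, the graph `G_d` is a connected,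
non-bipartite (i.e. not 2-colorable), `d`-regular graph on `3d - 1` vertices, and its toughness
is at most `1`: there is a proper vertex subset `S` with `c(G_d - S) ≥ 2` and
`|S| / c(G_d - S) ≤ 1`, i.e. `|S| ≤ c(G_d - S)`. -/
theorem Gd_properties (d : ℕ) (hd : 3 ≤ d) :
    (Gd d).Connected ∧ ¬ (Gd d).Colorable 2 ∧ (Gd d).IsRegularOfDegree d ∧
      Fintype.card (Fin d ⊕ (Fin (d - 1) ⊕ Fin d)) = 3 * d - 1 ∧
      ∃ S : Finset (Fin d ⊕ (Fin (d - 1) ⊕ Fin d)),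
        (↑S : Set (Fin d ⊕ (Fin (d - 1) ⊕ Fin d))) ≠ Set.univ ∧
        2 ≤ Nat.card ((Gd d).induce (↑S : Set (Fin d ⊕ (Fin (d - 1) ⊕ Fin d)))ᶜ).ConnectedComponent ∧
        S.card ≤ Nat.card ((Gd d).induce (↑S : Set (Fin d ⊕ (Fin (d - 1) ⊕ Fin d)))ᶜ).ConnectedComponent := by
  refine ⟨Gd_connected d hd, Gd_not_colorable d hd, Gd_regular d hd, ?_, Gd_tough d hd⟩
  simp only [Fintype.card_sum, Fintype.card_fin]
  omega
end

section
/- Let G be a connected d-regular graph with d ≥ 3. If there exists a proper subset S of V(G) such that G − S has at least 2 connected components and the number of connected components of G − S is strictly greater than |S|, then λ₂(G) > d − 1. -/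
open Matrix


/-- Reinterpret a plain function as an element of Euclidean space. -/
def toEuc {V : Type*} [Fintype V] (f : V → ℝ) : EuclideanSpace ℝ V := WithLp.toLp 2 f

@[simp] lemma toEuc_apply {V : Type*} [Fintype V] (f : V → ℝ) (v : V) : toEuc f v = f v := rfl

open Finset in
lemma inner_toEuc {V : Type*} [Fintype V] (f g : V → ℝ) :
    (inner ℝ (toEuc f) (toEuc g) : ℝ) = ∑ i, f i * g i := by
  simp [PiLp.inner_apply, toEuc]
  exact Finset.sum_congr rfl fun i _ => mul_comm _ _

open Finset in
/-- For a real symmetric matrix, `⟪x, A y⟫ = ⟪A x, y⟫`. -/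
lemma isHermitian_inner_mulVec {V : Type*} [Fintype V]
    (A : Matrix V V ℝ) (hA : A.IsHermitian) (x y : V → ℝ) :
    (inner ℝ (toEuc x) (toEuc (A.mulVec y)) : ℝ)
      = inner ℝ (toEuc (A.mulVec x)) (toEuc y) := by
  rw [inner_toEuc, inner_toEuc]
  have h1 : ∀ (f g : V → ℝ), ∑ i, f i * g i = dotProduct f g := fun f g => rfl
  rw [h1, h1, dotProduct_mulVec, ← Matrix.mulVec_transpose]
  have hsymm : Aᵀ = A := by
    have := hA.eq
    simpa [Matrix.IsHermitian, Matrix.conjTranspose_eq_transpose_of_trivial] using hA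
  rw [hsymm]

open Finset in
/-- If there is an eigenvector `u₁` of eigenvalue `dR > t`, and a nonzero vector `u₂`
orthogonal to it with Rayleigh quotient `> t`, then at least two eigenvalues exceed `t`. -/
lemma exists_two_big_eigs {V : Type*} [Fintype V] [DecidableEq V]
    (A : Matrix V V ℝ) (hA : A.IsHermitian) (t dR : ℝ)
    (u₁ u₂ : V → ℝ) (hu₁ : toEuc u₁ ≠ 0) (hu₂ : toEuc u₂ ≠ 0)
    (horth : ∑ i, u₁ i * u₂ i = 0)
    (heig : A.mulVec u₁ = dR • u₁)
    (htd : t < dR)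
    (hq : t * (∑ i, u₂ i * u₂ i) < ∑ i, u₂ i * (A.mulVec u₂ i)) :
    2 ≤ (Finset.univ.filter (fun i => t < hA.eigenvalues i)).card := by
  by_contra hcon
  push_neg at hcon
  have hcon1 : (Finset.univ.filter (fun i => t < hA.eigenvalues i)).card ≤ 1 := by omega
  have hne : Nonempty V := by
    by_contra hemp
    rw [not_nonempty_iff] at hemp
    exact hu₁ (by ext v; exact (hemp.false v).elim)
  obtain ⟨i₀, hi₀⟩ : ∃ i₀, ∀ i, t < hA.eigenvalues i → i = i₀ := by
    by_cases hx : ∃ i, t < hA.eigenvalues i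
    · obtain ⟨i, hi⟩ := hx
      refine ⟨i, fun j hj => ?_⟩
      exact Finset.card_le_one.mp hcon1 j (by simp [hj]) i (by simp [hi])
    · exact ⟨Classical.arbitrary V, fun i hi => absurd ⟨i, hi⟩ hx⟩
  set B := hA.eigenvectorBasis with hB
  set lam := hA.eigenvalues with hlam
  set a1 : ℝ := inner ℝ (B i₀) (toEuc u₁) with ha1def
  set a2 : ℝ := inner ℝ (B i₀) (toEuc u₂) with ha2def
  obtain ⟨α, β, hαβ, hc0⟩ : ∃ α β : ℝ, ¬(α = 0 ∧ β = 0) ∧ α * a1 + β * a2 = 0 := by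
    by_cases ha1 : a1 = 0
    · exact ⟨1, 0, by simp, by simp [ha1]⟩
    · exact ⟨a2, -a1, fun h => ha1 (by simpa using h.2), by ring⟩
  set y : V → ℝ := fun v => α * u₁ v + β * u₂ v with hy
  have hyE : toEuc y = α • toEuc u₁ + β • toEuc u₂ := rfl
  have hinn : ∀ z : EuclideanSpace ℝ V,
      (inner ℝ z (toEuc y) : ℝ) = α * inner ℝ z (toEuc u₁) + β * inner ℝ z (toEuc u₂) := by
    intro z
    rw [hyE, inner_add_right, real_inner_smul_right, real_inner_smul_right]
  have hci₀ : (inner ℝ (B i₀) (toEuc y) : ℝ) = 0 := by rw [hinn]; exact hc0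
  have hBfun : ∀ i, toEuc (⇑(B i)) = B i := fun i => rfl
  have key : ∀ i, (inner ℝ (B i) (toEuc (A.mulVec y)) : ℝ) = lam i * inner ℝ (B i) (toEuc y) := by
    intro i
    calc (inner ℝ (B i) (toEuc (A.mulVec y)) : ℝ)
        = inner ℝ (toEuc (⇑(B i))) (toEuc (A.mulVec y)) := rfl
      _ = inner ℝ (toEuc (A.mulVec (⇑(B i)))) (toEuc y) := isHermitian_inner_mulVec A hA _ _
      _ = inner ℝ (toEuc (lam i • ⇑(B i))) (toEuc y) := by rw [hA.mulVec_eigenvectorBasis i]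
      _ = lam i * inner ℝ (toEuc (⇑(B i))) (toEuc y) := by
          rw [inner_toEuc, inner_toEuc, Finset.mul_sum]
          refine Finset.sum_congr rfl fun v _ => ?_
          simp only [Pi.smul_apply, smul_eq_mul]
          ring
      _ = lam i * inner ℝ (B i) (toEuc y) := rfl
  have P1 : ∑ i, (inner ℝ (toEuc y) (B i) : ℝ) * inner ℝ (B i) (toEuc y)
      = inner ℝ (toEuc y) (toEuc y) := B.sum_inner_mul_inner _ _
  have P2 : ∑ i, (inner ℝ (toEuc y) (B i) : ℝ) * inner ℝ (B i) (toEuc (A.mulVec y))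
      = inner ℝ (toEuc y) (toEuc (A.mulVec y)) := B.sum_inner_mul_inner _ _
  -- upper bound
  have hup : (inner ℝ (toEuc y) (toEuc (A.mulVec y)) : ℝ)
      ≤ t * inner ℝ (toEuc y) (toEuc y) := by
    rw [← P1, ← P2, Finset.mul_sum]
    refine Finset.sum_le_sum fun i _ => ?_
    rw [key i]
    have hcomm : (inner ℝ (toEuc y) (B i) : ℝ) = inner ℝ (B i) (toEuc y) := real_inner_comm _ _
    rw [hcomm]
    by_cases hii : i = i₀
    · subst hii; rw [hci₀]; simp
    · have hle : lam i ≤ t := not_lt.mp (fun h => hii (hi₀ i h))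
      have hsq : (0:ℝ) ≤ (inner ℝ (B i) (toEuc y) : ℝ) * inner ℝ (B i) (toEuc y) :=
        mul_self_nonneg _
      nlinarith
  -- lower bound
  have sumsq_pos : ∀ u : V → ℝ, toEuc u ≠ 0 → (0:ℝ) < ∑ i, u i * u i := by
    intro u hu
    obtain ⟨v, hv⟩ : ∃ v, u v ≠ 0 := by
      by_contra hc
      push_neg at hc
      exact hu (by ext v; simpa using hc v)
    have h1 : (0:ℝ) < u v * u v := mul_self_pos.mpr hv
    have h2 : u v * u v ≤ ∑ i, u i * u i :=
      Finset.single_le_sum (fun i _ => mul_self_nonneg (u i)) (Finset.mem_univ v)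
    linarith
  have hS1 : (0:ℝ) < ∑ i, u₁ i * u₁ i := sumsq_pos u₁ hu₁
  have hS2 : (0:ℝ) < ∑ i, u₂ i * u₂ i := sumsq_pos u₂ hu₂
  have hAy : A.mulVec y = fun v => α * (dR * u₁ v) + β * (A.mulVec u₂ v) := by
    have : y = α • u₁ + β • u₂ := rfl
    rw [this, Matrix.mulVec_add, Matrix.mulVec_smul, Matrix.mulVec_smul, heig]
    funext v
    simp [mul_comm, mul_left_comm]
  have hcross : ∑ i, u₁ i * (A.mulVec u₂ i) = 0 := by
    have h := isHermitian_inner_mulVec A hA u₁ u₂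
    rw [inner_toEuc, inner_toEuc, heig] at h
    rw [h]
    have : ∑ i, (dR • u₁) i * u₂ i = dR * ∑ i, u₁ i * u₂ i := by
      simp [Finset.mul_sum, mul_assoc]
    rw [this, horth, mul_zero]
  have hQY : (inner ℝ (toEuc y) (toEuc (A.mulVec y)) : ℝ)
      = α^2 * dR * (∑ i, u₁ i * u₁ i) + β^2 * (∑ i, u₂ i * (A.mulVec u₂ i)) := by
    rw [inner_toEuc, hAy]
    have expand : ∀ v, y v * (α * (dR * u₁ v) + β * (A.mulVec u₂ v))
        = α^2 * dR * (u₁ v * u₁ v) + β^2 * (u₂ v * (A.mulVec u₂ v))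
          + (α*β*dR) * (u₂ v * u₁ v) + (α*β) * (u₁ v * (A.mulVec u₂ v)) := by
      intro v; simp only [hy]; ring
    rw [Finset.sum_congr rfl (fun v _ => expand v)]
    have h21 : ∑ i, u₂ i * u₁ i = 0 := by
      rw [← horth]; exact Finset.sum_congr rfl fun i _ => mul_comm _ _
    simp only [Finset.sum_add_distrib, ← Finset.mul_sum]
    rw [h21, hcross]
    ring
  have hNY : (inner ℝ (toEuc y) (toEuc y) : ℝ)
      = α^2 * (∑ i, u₁ i * u₁ i) + β^2 * (∑ i, u₂ i * u₂ i) := by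
    rw [inner_toEuc]
    have expand : ∀ v, y v * y v
        = α^2 * (u₁ v * u₁ v) + β^2 * (u₂ v * u₂ v) + (2*α*β) * (u₁ v * u₂ v) := by
      intro v; simp only [hy]; ring
    rw [Finset.sum_congr rfl (fun v _ => expand v)]
    simp only [Finset.sum_add_distrib, ← Finset.mul_sum]
    rw [horth]
    ring
  have hlow : t * (inner ℝ (toEuc y) (toEuc y) : ℝ)
      < inner ℝ (toEuc y) (toEuc (A.mulVec y)) := by
    rw [hQY, hNY]
    rcases not_and_or.mp hαβ with hα | hβ
    · have hα2 : (0:ℝ) < α^2 := by positivity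
      nlinarith [mul_le_mul_of_nonneg_left (le_of_lt hq) (sq_nonneg β),
        mul_lt_mul_of_pos_left htd (mul_pos hα2 hS1)]
    · have hβ2 : (0:ℝ) < β^2 := by positivity
      nlinarith [mul_lt_mul_of_pos_left hq hβ2,
        mul_le_mul_of_nonneg_left (le_of_lt htd) (mul_nonneg (sq_nonneg α) hS1.le)]
  linarith

lemma walk_exit {V : Type*} {G : SimpleGraph V} (P : V → Prop) :
    ∀ {a b : V}, G.Walk a b → P a → ¬P b → ∃ x y, G.Adj x y ∧ P x ∧ ¬P y := by
  intro a b w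
  induction w with
  | nil => intro h h'; exact absurd h h'
  | @cons u v b h p ih =>
    intro ha hb
    by_cases h2 : P v
    · exact ih h2 hb
    · exact ⟨u, v, h, ha, h2⟩


/-- If a multiset of reals contains at least two elements `> t`, then the
second-from-the-top entry of its increasing sort is `> t`. -/
lemma lt_getD_sort {M : Multiset ℝ} {t : ℝ}
    (h : 2 ≤ (M.filter (fun r => t < r)).card) :
    t < (M.sort (· ≤ ·)).getD (Multiset.card M - 2) 0 := by
  set L := M.sort (· ≤ ·) with hL
  have hlen : L.length = Multiset.card M := M.length_sort _
  have hsorted : L.Pairwise (· ≤ ·) := M.pairwise_sort _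
  have hML : (L : Multiset ℝ) = M := M.sort_eq _
  have hcount : (M.filter (fun r => t < r)).card = L.countP (fun r => decide (t < r)) := by
    rw [← hML]
    simp [Multiset.filter_coe, Multiset.coe_card, List.countP_eq_length_filter]
  by_contra hc
  push_neg at hc
  have hn2 : 2 ≤ Multiset.card M := by
    calc 2 ≤ (M.filter (fun r => t < r)).card := h
    _ ≤ Multiset.card M := Multiset.card_le_card (M.filter_le _)
  set n := L.length with hn
  have hidx : n - 2 < n := by omega
  have hgetD : L.getD (Multiset.card M - 2) 0 = L.get ⟨n - 2, hidx⟩ := by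
    rw [← hlen] at *; simp [List.getD_eq_getElem?_getD, List.getElem?_eq_getElem (show n - 2 < L.length from hidx)]
  rw [hgetD] at hc
  have htake : L.countP (fun r => decide (t < r)) ≤ 1 := by
    conv_lhs => rw [← List.take_append_drop (n - 1) L]
    rw [List.countP_append]
    have h1 : (L.take (n - 1)).countP (fun r => decide (t < r)) = 0 := by
      rw [List.countP_eq_zero]
      intro a ha
      obtain ⟨i, hi, hieq⟩ := List.mem_take_iff_getElem.mp ha
      have hile : i ≤ n - 2 := by
        have := lt_min_iff.mp hi
        omega
      have hin : i < n := by omega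
      have hmono : L.get ⟨i, hin⟩ ≤ L.get ⟨n - 2, hidx⟩ :=
        hsorted.rel_get_of_le (by simpa using hile)
      simp only [List.get_eq_getElem] at hmono
      rw [← hieq] at *
      simp only [List.getElem_take] at *
      simp only [decide_eq_true_eq]
      push_neg
      calc L[i] ≤ L.get ⟨n-2, hidx⟩ := by simpa using hmono
        _ ≤ t := hc
    have h2 : (L.drop (n - 1)).countP (fun r => decide (t < r)) ≤ 1 := by
      calc (L.drop (n - 1)).countP _ ≤ (L.drop (n - 1)).length := List.countP_le_length
        _ = n - (n - 1) := by rw [List.length_drop]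
        _ ≤ 1 := by omega
    omega
  omega


lemma adjEigenvalues_eq_map {V : Type*} [Fintype V] [DecidableEq V] (G : SimpleGraph V) [inst : DecidableRel G.Adj] :
    adjEigenvalues G = Finset.univ.val.map (adjMatrix_isHermitian G).eigenvalues := by
  unfold adjEigenvalues
  congr!

set_option maxHeartbeats 2000000

/-- **Claim.** Let `G` be a connected `d`-regular graph with `d ≥ 3`. If there is a proper
vertex subset `S` such that `G - S` has at least two connected components and strictly more
than `|S|` connected components, then `λ₂(G) > d - 1`. -/
theorem lambda2_gt_of_many_components {V : Type*} [Fintype V] (G : SimpleGraph V)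
    [DecidableRel G.Adj] (d : ℕ) (hd : 3 ≤ d) (hconn : G.Connected)
    (hreg : G.IsRegularOfDegree d) (S : Finset V) (hproper : (↑S : Set V) ≠ Set.univ)
    (h2 : 2 ≤ Nat.card (G.induce (↑S : Set V)ᶜ).ConnectedComponent)
    (hgt : S.card < Nat.card (G.induce (↑S : Set V)ᶜ).ConnectedComponent) :
    (d : ℝ) - 1 < lambda2 G := by
  classical
  haveI : Fintype (G.induce ((↑S : Set V)ᶜ)).ConnectedComponent := Fintype.ofFinite _
  have hSne : S.Nonempty := by
    rw [Finset.nonempty_iff_ne_empty]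
    rintro rfl
    have hall : ∀ v : V, v ∈ ((↑(∅ : Finset V) : Set V)ᶜ) := by simp
    have lift : ∀ (p q : V), G.Walk p q → ∀ (hp : p ∈ ((↑(∅ : Finset V) : Set V)ᶜ))
        (hq : q ∈ ((↑(∅ : Finset V) : Set V)ᶜ)),
        (G.induce ((↑(∅ : Finset V) : Set V)ᶜ)).Reachable ⟨p, hp⟩ ⟨q, hq⟩ := by
      intro p q w
      induction w with
      | nil => intro hp hq; rfl
      | @cons u v b h pw ih =>
        intro hp hq
        have hadj : (G.induce ((↑(∅ : Finset V) : Set V)ᶜ)).Adj ⟨u, hp⟩ ⟨v, hall v⟩ := by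
          simpa using h
        exact hadj.reachable.trans (ih (hall v) hq)
    have hsub : ∀ (c c' : (G.induce ((↑(∅ : Finset V) : Set V)ᶜ)).ConnectedComponent),
        c = c' := by
      refine SimpleGraph.ConnectedComponent.ind₂ (fun v w => ?_)
      exact SimpleGraph.ConnectedComponent.sound
        (lift v.1 w.1 (hconn.preconnected v.1 w.1).some v.2 w.2)
    have hnt : Nontrivial (G.induce ((↑(∅ : Finset V) : Set V)ᶜ)).ConnectedComponent :=
      Finite.one_lt_card_iff_nontrivial.mp (by omega)
    obtain ⟨c, c', hcc⟩ := hnt.exists_pair_ne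
    exact hcc (hsub c c')
  set F : (G.induce ((↑S : Set V)ᶜ)).ConnectedComponent → Finset V := fun c =>
    Finset.univ.filter (fun v =>
      ∃ hv : v ∈ ((↑S : Set V)ᶜ), (G.induce ((↑S : Set V)ᶜ)).connectedComponentMk ⟨v, hv⟩ = c)
    with hF
  have hmemF : ∀ c v, v ∈ F c ↔
      ∃ hv : v ∈ ((↑S : Set V)ᶜ), (G.induce ((↑S : Set V)ᶜ)).connectedComponentMk ⟨v, hv⟩ = c := by
    intro c v; simp [hF]
  have hFS : ∀ c v, v ∈ F c → v ∉ S := by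
    intro c v hv
    obtain ⟨hv', _⟩ := (hmemF c v).mp hv
    simpa using hv'
  have hFdisj : ∀ c c' v, v ∈ F c → v ∈ F c' → c = c' := by
    intro c c' v hv hv'
    obtain ⟨h1, h2⟩ := (hmemF c v).mp hv
    obtain ⟨h1', h2'⟩ := (hmemF c' v).mp hv'
    rw [← h2, ← h2']
  have hFadj : ∀ c c' u v, c ≠ c' → u ∈ F c → v ∈ F c' → ¬ G.Adj u v := by
    intro c c' u v hne hu hv hadj
    obtain ⟨h1, h2⟩ := (hmemF c u).mp hu
    obtain ⟨h1', h2'⟩ := (hmemF c' v).mp hv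
    have hHadj : (G.induce ((↑S : Set V)ᶜ)).Adj ⟨u, h1⟩ ⟨v, h1'⟩ := by
      simpa using hadj
    have := SimpleGraph.ConnectedComponent.connectedComponentMk_eq_of_adj hHadj
    rw [h2, h2'] at this
    exact hne this
  have hcover : ∀ v (hv : v ∈ ((↑S : Set V)ᶜ)),
      v ∈ F ((G.induce ((↑S : Set V)ᶜ)).connectedComponentMk ⟨v, hv⟩) := by
    intro v hv; exact (hmemF _ v).mpr ⟨hv, rfl⟩
  have hFne : ∀ c, (F c).Nonempty := by
    intro c
    induction c using SimpleGraph.ConnectedComponent.ind with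
    | _ w => exact ⟨w.1, (hmemF _ _).mpr ⟨w.2, by simp⟩⟩
  -- the edge-counting function
  set a : V → V → ℕ := fun u v => if G.Adj u v then 1 else 0 with ha
  have ha_symm : ∀ u v, a u v = a v u := by
    intro u v; simp only [ha]; exact if_congr (G.adj_comm u v) rfl rfl
  have ha_le : ∀ u v, a u v ≤ 1 := by intro u v; simp only [ha]; split <;> omega
  have hdeg : ∀ u, ∑ v, a u v = d := by
    intro u
    have : ∑ v, a u v = (G.neighborFinset u).card := by
      rw [SimpleGraph.neighborFinset_eq_filter]
      simp [ha, Finset.sum_boole]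
    rw [this]
    exact hreg u
  set nC : _ → ℕ := fun c => (F c).card with hnC
  set EC : _ → ℕ := fun c => ∑ u ∈ F c, ∑ v ∈ S, a u v with hEC
  set MC : _ → ℕ := fun c => ∑ u ∈ F c, ∑ v ∈ F c, a u v with hMC
  have hsplit : ∀ c, ∀ u ∈ F c, (∑ v ∈ F c, a u v) + (∑ v ∈ S, a u v) = d := by
    intro c u hu
    have hdisj : Disjoint (F c) S := by
      rw [Finset.disjoint_left]; intro v hv; exact hFS c v hv
    rw [← Finset.sum_union hdisj, ← hdeg u]
    apply Finset.sum_subset (Finset.subset_univ _)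
    intro v _ hvn
    rw [Finset.mem_union] at hvn
    push_neg at hvn
    obtain ⟨hv1, hv2⟩ := hvn
    have hvK : v ∈ ((↑S : Set V)ᶜ) := by simpa using hv2
    simp only [ha, ite_eq_right_iff]
    intro hadj
    exfalso
    obtain ⟨h1, h2⟩ := (hmemF c u).mp hu
    have hHadj : (G.induce ((↑S : Set V)ᶜ)).Adj ⟨u, h1⟩ ⟨v, hvK⟩ := by simpa using hadj
    have hveq := SimpleGraph.ConnectedComponent.connectedComponentMk_eq_of_adj hHadj
    exact hv1 ((hmemF c v).mpr ⟨hvK, by rw [← hveq, h2]⟩)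
  have hMCEC : ∀ c, MC c + EC c = d * nC c := by
    intro c
    simp only [hMC, hEC, hnC, ← Finset.sum_add_distrib]
    rw [Finset.sum_congr rfl (fun u hu => hsplit c u hu), Finset.sum_const, smul_eq_mul,
      mul_comm]
  have hMCle : ∀ c, MC c ≤ nC c * (nC c - 1) := by
    intro c
    simp only [hMC, hnC]
    have hbound : ∀ u ∈ F c, ∑ v ∈ F c, a u v ≤ (F c).card - 1 := by
      intro u hu
      have h0 : a u u = 0 := by simp [ha]
      rw [← Finset.sum_erase _ h0]
      calc ∑ v ∈ (F c).erase u, a u v ≤ ∑ _v ∈ (F c).erase u, 1 :=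
            Finset.sum_le_sum (fun v _ => ha_le u v)
        _ = ((F c).erase u).card := by simp
        _ = (F c).card - 1 := Finset.card_erase_of_mem hu
    calc ∑ u ∈ F c, ∑ v ∈ F c, a u v ≤ ∑ _u ∈ F c, ((F c).card - 1) :=
          Finset.sum_le_sum hbound
      _ = (F c).card * ((F c).card - 1) := by simp [mul_comm]
  have hnC1 : ∀ c, 1 ≤ nC c := by
    intro c
    exact Finset.card_pos.mpr (hFne c)
  have hEC1 : ∀ c, 1 ≤ EC c := by
    intro c
    obtain ⟨u₀, hu₀⟩ := hFne c
    obtain ⟨s₀, hs₀⟩ := hSne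
    obtain ⟨w⟩ := hconn.preconnected u₀ s₀
    have hPs₀ : s₀ ∉ F c := fun h => hFS c s₀ h hs₀
    obtain ⟨x, y, hadj, hPx, hPy⟩ := walk_exit (fun v => v ∈ F c) w hu₀ hPs₀
    have hyS : y ∈ S := by
      by_contra hyn
      have hyK : y ∈ ((↑S : Set V)ᶜ) := by simpa using hyn
      obtain ⟨h1, h2⟩ := (hmemF c x).mp hPx
      have hHadj : (G.induce ((↑S : Set V)ᶜ)).Adj ⟨x, h1⟩ ⟨y, hyK⟩ := by simpa using hadj
      have hveq := SimpleGraph.ConnectedComponent.connectedComponentMk_eq_of_adj hHadj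
      exact hPy ((hmemF c y).mpr ⟨hyK, by rw [← hveq, h2]⟩)
    have h1 : 1 = a x y := by simp [ha, hadj]
    calc 1 = a x y := h1
      _ ≤ ∑ v ∈ S, a x v :=
          Finset.single_le_sum (fun v _ => Nat.zero_le _) hyS
      _ ≤ ∑ u ∈ F c, ∑ v ∈ S, a u v :=
          Finset.single_le_sum (f := fun u => ∑ v ∈ S, a u v)
            (fun u _ => Nat.zero_le _) hPx
  have hkey : ∀ c, d ≤ EC c ∨ EC c + 1 ≤ nC c := by
    intro c
    by_cases hgood : EC c + 1 ≤ nC c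
    · exact Or.inr hgood
    · left
      push_neg at hgood
      -- nC c ≤ EC c
      by_cases hnd : nC c ≤ d
      · obtain ⟨m, hm⟩ : ∃ m, nC c = m + 1 := ⟨nC c - 1, by have := hnC1 c; omega⟩
        have h1 : d * nC c ≤ EC c + nC c * (nC c - 1) := by
          have := hMCEC c
          have := hMCle c
          omega
        rw [hm] at h1 hnd
        have h1b : d * (m + 1) ≤ EC c + (m + 1) * m := by simpa using h1
        have h2 : (d : ℤ) * (m + 1) ≤ EC c + (m + 1) * m := by exact_mod_cast h1b
        have h3 : (m : ℤ) + 1 ≤ d := by exact_mod_cast hnd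
        have h4 : (0:ℤ) ≤ ((d:ℤ) - (m + 1)) * m :=
          mul_nonneg (by omega) (by positivity)
        have : (d : ℤ) ≤ EC c := by nlinarith
        exact_mod_cast this
      · push_neg at hnd
        omega
  have hEsum : ∑ c, EC c ≤ d * S.card := by
    have hdisjF : (↑(Finset.univ : Finset (G.induce ((↑S : Set V)ᶜ)).ConnectedComponent) : Set _).PairwiseDisjoint F := by
      intro c _ c' _ hcc
      rw [Function.onFun, Finset.disjoint_left]
      intro v hv hv'
      exact hcc (hFdisj c c' v hv hv')
    have h1 : ∑ c, EC c = ∑ u ∈ Finset.univ.biUnion F, ∑ v ∈ S, a u v := by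
      rw [Finset.sum_biUnion hdisjF]
    have h2 : ∑ u ∈ Finset.univ.biUnion F, ∑ v ∈ S, a u v
        ≤ ∑ u, ∑ v ∈ S, a u v :=
      Finset.sum_le_sum_of_subset (Finset.subset_univ _)
    have h3 : ∑ u, ∑ v ∈ S, a u v = ∑ v ∈ S, ∑ u, a u v := Finset.sum_comm
    have h4 : ∀ v, ∑ u, a u v = d := by
      intro v
      rw [Finset.sum_congr rfl (fun u _ => ha_symm u v)]
      exact hdeg v
    rw [h1]
    calc ∑ u ∈ Finset.univ.biUnion F, ∑ v ∈ S, a u v ≤ ∑ v ∈ S, ∑ u, a u v := by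
          rw [← h3]; exact h2
      _ = ∑ _v ∈ S, d := Finset.sum_congr rfl (fun v _ => h4 v)
      _ = d * S.card := by rw [Finset.sum_const, smul_eq_mul, mul_comm]
  -- hypotheses that will come from the theorem statement
  have hc2 : 2 ≤ Fintype.card (G.induce ((↑S : Set V)ᶜ)).ConnectedComponent := by
    rwa [Nat.card_eq_fintype_card] at h2
  have hSlt : S.card < Fintype.card (G.induce ((↑S : Set V)ᶜ)).ConnectedComponent := by
    rwa [Nat.card_eq_fintype_card] at hgt
  set Good : Finset _ := Finset.univ.filter (fun c => EC c + 1 ≤ nC c) with hGoodDef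
  have hGood2 : 2 ≤ Good.card := by
    by_contra hg
    push_neg at hg
    have hg1 : Good.card ≤ 1 := by omega
    set Bad : Finset _ := Finset.univ.filter (fun c => ¬(EC c + 1 ≤ nC c)) with hBadDef
    have hbadlb : ∀ c ∈ Bad, d ≤ EC c := by
      intro c hc
      rcases hkey c with h | h
      · exact h
      · exact absurd h (by simpa [hBadDef] using (Finset.mem_filter.mp hc).2)
    have hsum1 : ∑ c ∈ Good, EC c + ∑ c ∈ Bad, EC c = ∑ c, EC c :=
      Finset.sum_filter_add_sum_filter_not _ _ _
    have hApart : Good.card * 1 ≤ ∑ c ∈ Good, EC c := by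
      calc Good.card * 1 = Good.card • 1 := by simp
        _ ≤ ∑ c ∈ Good, EC c := Finset.card_nsmul_le_sum Good EC 1 (fun c _ => hEC1 c)
    have hBpart : Bad.card * d ≤ ∑ c ∈ Bad, EC c := by
      calc Bad.card * d = Bad.card • d := by simp
        _ ≤ ∑ c ∈ Bad, EC c := Finset.card_nsmul_le_sum Bad EC d hbadlb
    have hcards : Good.card + Bad.card
        = Fintype.card (G.induce ((↑S : Set V)ᶜ)).ConnectedComponent := by
      rw [hGoodDef, hBadDef]
      rw [Finset.card_filter_add_card_filter_not]
      · exact Finset.card_univ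
    -- pass to integers
    have hineq : (Good.card : ℤ) * 1 + (Bad.card : ℤ) * d ≤ (d : ℤ) * S.card := by
      have h1 : Good.card * 1 + Bad.card * d ≤ ∑ c, EC c := by
        rw [← hsum1]; exact Nat.add_le_add hApart hBpart
      have h2 : Good.card * 1 + Bad.card * d ≤ d * S.card := le_trans h1 hEsum
      exact_mod_cast h2
    have hSc : (S.card : ℤ) + 1 ≤ (Good.card : ℤ) + Bad.card := by
      have : S.card + 1 ≤ Good.card + Bad.card := by rw [hcards]; omega
      exact_mod_cast this
    have hgz : (0 : ℤ) ≤ Good.card := Int.natCast_nonneg _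
    have hbz : (0 : ℤ) ≤ Bad.card := Int.natCast_nonneg _
    have hg1z : (Good.card : ℤ) ≤ 1 := by exact_mod_cast hg1
    have hdz : (3 : ℤ) ≤ d := by exact_mod_cast hd
    nlinarith [mul_le_mul_of_nonneg_right hg1z (by linarith : (0:ℤ) ≤ (d:ℤ))]
  obtain ⟨c₁, hc₁, c₂, hc₂, hc12⟩ := Finset.one_lt_card.mp (by omega : 1 < Good.card)
  have hgood₁ : EC c₁ + 1 ≤ nC c₁ := by simpa [hGoodDef] using hc₁
  have hgood₂ : EC c₂ + 1 ≤ nC c₂ := by simpa [hGoodDef] using hc₂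
  -- real indicator machinery
  set ind : _ → V → ℝ := fun c v => if v ∈ F c then (1:ℝ) else 0 with hind
  set x : V → ℝ := fun v => (nC c₂ : ℝ) * ind c₁ v - (nC c₁ : ℝ) * ind c₂ v with hx
  have hsum_ind_mul : ∀ (c) (g : V → ℝ), ∑ v, g v * ind c v = ∑ v ∈ F c, g v := by
    intro c g
    simp only [hind, mul_ite, mul_one, mul_zero]
    rw [Finset.sum_ite_mem, Finset.univ_inter]
  have hsum_ind : ∀ c, ∑ v, ind c v = (nC c : ℝ) := by
    intro c
    have := hsum_ind_mul c (fun _ => (1:ℝ))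
    simpa [hnC] using this
  have hind12 : ∀ v, ind c₁ v * ind c₂ v = 0 := by
    intro v
    simp only [hind]
    by_cases h1 : v ∈ F c₁ <;> by_cases h2 : v ∈ F c₂ <;> simp [h1, h2]
    exact absurd (hFdisj c₁ c₂ v h1 h2) hc12
  have haR : ∀ v w, (G.adjMatrix ℝ) v w = ((a v w : ℕ) : ℝ) := by
    intro v w
    simp [ha, SimpleGraph.adjMatrix_apply, apply_ite (fun n : ℕ => (n:ℝ))]
  have hmulv : ∀ v, ((G.adjMatrix ℝ) *ᵥ x) v = ∑ w, ((a v w : ℕ) : ℝ) * x w := by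
    intro v
    rw [Matrix.mulVec, dotProduct]
    exact Finset.sum_congr rfl fun w _ => by rw [haR]
  -- the two diagonal block sums
  have hT : ∀ ci cj, ∑ v, ∑ w, ((a v w : ℕ) : ℝ) * (ind ci v * ind cj w)
      = ∑ v ∈ F ci, ∑ w ∈ F cj, ((a v w : ℕ) : ℝ) := by
    intro ci cj
    have hinner : ∀ v, ∑ w, ((a v w : ℕ) : ℝ) * (ind ci v * ind cj w)
        = (∑ w ∈ F cj, ((a v w : ℕ) : ℝ)) * ind ci v := by
      intro v
      rw [← hsum_ind_mul cj (fun w => ((a v w : ℕ):ℝ)), Finset.sum_mul]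
      refine Finset.sum_congr rfl fun w _ => by ring
    rw [Finset.sum_congr rfl (fun v _ => hinner v), hsum_ind_mul ci]
  have hT12 : ∑ v ∈ F c₁, ∑ w ∈ F c₂, ((a v w : ℕ) : ℝ) = 0 := by
    refine Finset.sum_eq_zero fun v hv => Finset.sum_eq_zero fun w hw => ?_
    have := hFadj c₁ c₂ v w hc12 hv hw
    simp [ha, this]
  have hT21 : ∑ v ∈ F c₂, ∑ w ∈ F c₁, ((a v w : ℕ) : ℝ) = 0 := by
    refine Finset.sum_eq_zero fun v hv => Finset.sum_eq_zero fun w hw => ?_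
    have := hFadj c₂ c₁ v w (Ne.symm hc12) hv hw
    simp [ha, this]
  have hTdiag : ∀ c, ∑ v ∈ F c, ∑ w ∈ F c, ((a v w : ℕ) : ℝ)
      = (d : ℝ) * (nC c : ℝ) - (EC c : ℝ) := by
    intro c
    have h1 : ∑ v ∈ F c, ∑ w ∈ F c, ((a v w : ℕ) : ℝ) = ((MC c : ℕ) : ℝ) := by
      rw [hMC]; push_cast; rfl
    rw [h1]
    have h2 := hMCEC c
    have : ((MC c : ℕ) : ℝ) + ((EC c : ℕ) : ℝ) = (d:ℝ) * ((nC c : ℕ):ℝ) := by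
      exact_mod_cast congrArg (fun n : ℕ => (n : ℝ)) h2
    linarith
  -- quadratic form of x
  have hxq : ∑ v, x v * ((G.adjMatrix ℝ) *ᵥ x) v
      = (nC c₂ : ℝ)^2 * ((d:ℝ) * (nC c₁:ℝ) - (EC c₁:ℝ))
        + (nC c₁ : ℝ)^2 * ((d:ℝ) * (nC c₂:ℝ) - (EC c₂:ℝ)) := by
    have hdouble : ∑ v, x v * ((G.adjMatrix ℝ) *ᵥ x) v
        = ∑ v, ∑ w, ((a v w : ℕ) : ℝ) * (x v * x w) := by
      refine Finset.sum_congr rfl fun v _ => ?_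
      rw [hmulv v, Finset.mul_sum]
      refine Finset.sum_congr rfl fun w _ => by ring
    rw [hdouble]
    have hexp : ∀ v w, ((a v w : ℕ) : ℝ) * (x v * x w)
        = (nC c₂:ℝ)^2 * (((a v w : ℕ):ℝ) * (ind c₁ v * ind c₁ w))
          + (nC c₁:ℝ)^2 * (((a v w : ℕ):ℝ) * (ind c₂ v * ind c₂ w))
          - (nC c₁:ℝ) * (nC c₂:ℝ) * (((a v w : ℕ):ℝ) * (ind c₁ v * ind c₂ w))
          - (nC c₁:ℝ) * (nC c₂:ℝ) * (((a v w : ℕ):ℝ) * (ind c₂ v * ind c₁ w)) := by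
      intro v w
      simp only [hx]
      ring
    rw [Finset.sum_congr rfl (fun v _ => Finset.sum_congr rfl (fun w _ => hexp v w))]
    simp only [Finset.sum_sub_distrib, Finset.sum_add_distrib, ← Finset.mul_sum]
    rw [hT c₁ c₁, hT c₂ c₂, hT c₁ c₂, hT c₂ c₁, hT12, hT21, hTdiag c₁, hTdiag c₂]
    ring
  -- norm of x
  have hxn : ∑ v, x v * x v = (nC c₂:ℝ)^2 * (nC c₁:ℝ) + (nC c₁:ℝ)^2 * (nC c₂:ℝ) := by
    have hexp : ∀ v, x v * x v
        = (nC c₂:ℝ)^2 * ind c₁ v + (nC c₁:ℝ)^2 * ind c₂ v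
          - 2 * (nC c₁:ℝ) * (nC c₂:ℝ) * (ind c₁ v * ind c₂ v) := by
      intro v
      have hsq : ∀ c, ind c v * ind c v = ind c v := by
        intro c; simp only [hind]; by_cases h : v ∈ F c <;> simp [h]
      simp only [hx]
      have h1 := hsq c₁
      have h2 := hsq c₂
      nlinarith [h1, h2]
    rw [Finset.sum_congr rfl (fun v _ => hexp v)]
    simp only [Finset.sum_sub_distrib, Finset.sum_add_distrib, ← Finset.mul_sum]
    rw [hsum_ind c₁, hsum_ind c₂]
    have hz : ∑ v, ind c₁ v * ind c₂ v = 0 :=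
      Finset.sum_eq_zero fun v _ => hind12 v
    rw [hz]
    ring
  -- sum of x is zero
  have hxsum : ∑ v, (1:ℝ) * x v = 0 := by
    simp only [one_mul, hx, Finset.sum_sub_distrib, ← Finset.mul_sum]
    rw [hsum_ind c₁, hsum_ind c₂]
    ring
  -- apply the spectral lemma
  have htwo : 2 ≤ (Finset.univ.filter
      (fun i => ((d:ℝ) - 1) < (adjMatrix_isHermitian G).eigenvalues i)).card := by
    obtain ⟨s₀, hs₀⟩ := hSne
    obtain ⟨u₀, hu₀⟩ := hFne c₁
    refine exists_two_big_eigs (G.adjMatrix ℝ) (adjMatrix_isHermitian G)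
      ((d:ℝ) - 1) (d:ℝ) (fun _ => (1:ℝ)) x ?_ ?_ hxsum ?_ (by linarith) ?_
    · intro h0
      exact (one_ne_zero : (1:ℝ) ≠ 0) (by simpa using congrArg (fun z : EuclideanSpace ℝ V => z s₀) h0)
    · intro h0
      have hxu : x u₀ = (nC c₂ : ℝ) := by
        have h1 : ind c₁ u₀ = 1 := by simp [hind, hu₀]
        have h2 : ind c₂ u₀ = 0 := by
          simp only [hind, ite_eq_right_iff]
          intro hmem
          exact absurd (hFdisj c₁ c₂ u₀ hu₀ hmem) hc12
        simp [hx, h1, h2]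
      have hz : x u₀ = 0 := by simpa using congrArg (fun z : EuclideanSpace ℝ V => z u₀) h0
      rw [hxu] at hz
      have := hnC1 c₂
      have : (1:ℝ) ≤ (nC c₂ : ℝ) := by exact_mod_cast this
      linarith
    · funext v
      have : ((G.adjMatrix ℝ) *ᵥ (Function.const V (1:ℝ))) v = (d:ℝ) * 1 :=
        SimpleGraph.adjMatrix_mulVec_const_apply_of_regular hreg
      simpa using this
    · rw [hxn, hxq]
      have q1 : (EC c₁:ℝ) + 1 ≤ (nC c₁:ℝ) := by exact_mod_cast hgood₁
      have q2 : (EC c₂:ℝ) + 1 ≤ (nC c₂:ℝ) := by exact_mod_cast hgood₂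
      have p1 : (1:ℝ) ≤ (nC c₁:ℝ) := by exact_mod_cast hnC1 c₁
      have p2 : (1:ℝ) ≤ (nC c₂:ℝ) := by exact_mod_cast hnC1 c₂
      have e1 : (0:ℝ) ≤ (EC c₁:ℝ) := by positivity
      have e2 : (0:ℝ) ≤ (EC c₂:ℝ) := by positivity
      nlinarith [mul_le_mul_of_nonneg_left q1 (sq_nonneg ((nC c₂:ℝ))),
        mul_le_mul_of_nonneg_left q2 (sq_nonneg ((nC c₁:ℝ))),
        sq_nonneg ((nC c₁:ℝ)), sq_nonneg ((nC c₂:ℝ)),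
        mul_le_mul p2 p2 zero_le_one (by linarith : (0:ℝ) ≤ (nC c₂:ℝ)),
        mul_le_mul p1 p1 zero_le_one (by linarith : (0:ℝ) ≤ (nC c₁:ℝ))]
  -- translate to the eigenvalue multiset
  have hAE : adjEigenvalues G = Finset.univ.val.map (adjMatrix_isHermitian G).eigenvalues :=
    adjEigenvalues_eq_map G
  have hfilt : 2 ≤ Multiset.card ((adjEigenvalues G).filter (fun r => (d:ℝ) - 1 < r)) := by
    rw [hAE, Multiset.filter_map, Multiset.card_map]
    have heqf : Multiset.filter ((fun r => (d:ℝ) - 1 < r) ∘ (adjMatrix_isHermitian G).eigenvalues)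
          Finset.univ.val
        = (Finset.univ.filter
            (fun i => ((d:ℝ) - 1) < (adjMatrix_isHermitian G).eigenvalues i)).val := by
      rw [Finset.filter_val]
      exact Multiset.filter_congr (fun i _ => Iff.rfl)
    rw [heqf]
    exact htwo
  have hcardM : Multiset.card (adjEigenvalues G) = Fintype.card V := by
    rw [hAE, Multiset.card_map]
    exact Finset.card_univ
  have hfin := lt_getD_sort hfilt
  rw [hcardM] at hfin
  exact hfin
end

section
/- Let H be a connected k-regular graph with k ≥ 1, and let S be a nonempty subset of V(H) such that the number of odd components of H − S is at least |S| + 2. Then there are at least three odd components Q of H − S satisfying e_H(V(Q), V(H) ∖ V(Q)) < k. -/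
open Finset

/-- If `H` is a connected `k`-regular graph (`k ≥ 1`) and `S` is a nonempty vertex subset such
that `H - S` has at least `|S| + 2` odd components, then at least three odd components `Q` of
`H - S` satisfy `e_H(V(Q), V(H) \ V(Q)) < k`. -/
theorem three_odd_components_with_small_boundary {V : Type*} [Fintype V] (H : SimpleGraph V)
    [DecidableRel H.Adj] (k : ℕ) (hk : 1 ≤ k) (hconn : H.Connected)
    (hreg : H.IsRegularOfDegree k) (S : Finset V) (hS : S.Nonempty)
    (hodd : S.card + 2 ≤
      Nat.card {c : (H.induce (↑S : Set V)ᶜ).ConnectedComponent // Odd (Nat.card c.supp)}) :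
    ∃ c₁ c₂ c₃ : (H.induce (↑S : Set V)ᶜ).ConnectedComponent,
      c₁ ≠ c₂ ∧ c₁ ≠ c₃ ∧ c₂ ≠ c₃ ∧
      ∀ c ∈ [c₁, c₂, c₃], Odd (Nat.card c.supp) ∧
        crossPairs H (Subtype.val '' c.supp) (Subtype.val '' c.supp)ᶜ < k := by
  classical
  set G := H.induce (↑S : Set V)ᶜ with hG
  haveI : Fintype G.ConnectedComponent := Fintype.ofFinite _
  set Q : G.ConnectedComponent → Set V := fun c => Subtype.val '' c.supp with hQ
  -- basic facts about Q
  have hQsub : ∀ c, Q c ⊆ (↑S : Set V)ᶜ := by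
    rintro c v ⟨u, _, rfl⟩; exact u.2
  have crossPairs_eq_card : ∀ A B : Set V, crossPairs H A B =
      (Finset.univ.filter fun p : V × V =>
        p.1 ∈ A ∧ p.2 ∈ B ∧ H.Adj p.1 p.2).card := by
    intro A B
    rw [crossPairs, ← Set.ncard_coe_finset]
    congr 1
    ext p
    simp
  -- any H-neighbor of Q c outside S lies in Q c
  have hclosed : ∀ (c) (u v : V), u ∈ Q c → H.Adj u v → v ∉ (↑S : Set V) → v ∈ Q c := by
    rintro c u v ⟨u', hu', rfl⟩ hadj hv
    refine ⟨⟨v, hv⟩, ?_, rfl⟩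
    have hadj' : G.Adj u' ⟨v, hv⟩ := hadj
    rw [SimpleGraph.ConnectedComponent.mem_supp_iff] at hu' ⊢
    rw [← hu']
    exact SimpleGraph.ConnectedComponent.sound hadj'.symm.reachable
  -- Finset versions
  set F : G.ConnectedComponent → Finset (V × V) := fun c =>
    Finset.univ.filter fun p : V × V => p.1 ∈ Q c ∧ p.2 ∈ (Q c)ᶜ ∧ H.Adj p.1 p.2 with hF
  set P : G.ConnectedComponent → Finset (V × V) := fun c =>
    Finset.univ.filter fun p : V × V => p.1 ∈ Q c ∧ p.2 ∈ S ∧ H.Adj p.1 p.2 with hP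
  have hFP : ∀ c, F c ⊆ P c := by
    intro c p hp
    simp only [hF, hP, Finset.mem_filter, Finset.mem_univ, true_and] at hp ⊢
    obtain ⟨h1, h2, h3⟩ := hp
    refine ⟨h1, ?_, h3⟩
    by_contra hvS
    exact h2 (hclosed c p.1 p.2 h1 h3 hvS)
  have hcross : ∀ c, crossPairs H (Q c) (Q c)ᶜ = (F c).card := by
    intro c
    rw [crossPairs_eq_card]
    congr 1
    ext p
    simp [hF]
  -- lower bound 1 : every component has a boundary edge
  have hF1 : ∀ c, 1 ≤ (F c).card := by
    intro c
    obtain ⟨u', hu'⟩ := c.exists_rep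
    obtain ⟨s, hs⟩ := hS
    have hu : (u' : V) ∈ Q c :=
      ⟨u', by rw [SimpleGraph.ConnectedComponent.mem_supp_iff]; exact hu', rfl⟩
    have hsQ : s ∉ Q c := fun h => (hQsub c h) (by simpa using hs)
    obtain ⟨w⟩ := hconn.preconnected (u' : V) s
    obtain ⟨d, _, hd1, hd2⟩ := w.exists_boundary_dart (Q c) hu hsQ
    rw [Finset.one_le_card]
    exact ⟨(d.fst, d.snd), by simp [hF, hd1, hd2, d.adj]⟩
  -- total upper bound
  set big : Finset (V × V) :=
    Finset.univ.filter (fun p : V × V => p.2 ∈ S ∧ H.Adj p.1 p.2) with hbig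
  have hbigcard : big.card = k * S.card := by
    rw [Finset.card_eq_sum_card_fiberwise
      (f := Prod.snd) (t := S) (fun p hp => by
        exact Finset.mem_coe.mpr (Finset.mem_filter.mp (Finset.mem_coe.mp hp)).2.1)]
    have : ∀ v ∈ S, (big.filter fun p => p.2 = v).card = k := by
      intro v hv
      have himg : big.filter (fun p => p.2 = v) =
          (H.neighborFinset v).image (fun u => (u, v)) := by
        ext ⟨a, b⟩
        simp only [hbig, Finset.mem_filter, Finset.mem_univ, true_and, Finset.mem_image,
          SimpleGraph.mem_neighborFinset, Prod.mk.injEq]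
        constructor
        · rintro ⟨⟨_, hadj⟩, rfl⟩; exact ⟨a, hadj.symm, rfl, rfl⟩
        · rintro ⟨u, hadj, rfl, rfl⟩; exact ⟨⟨hv, hadj.symm⟩, rfl⟩
      rw [himg, Finset.card_image_of_injective _ (fun a b h => (Prod.mk.injEq _ _ _ _).mp h |>.1)]
      exact hreg v
    rw [Finset.sum_congr rfl this, Finset.sum_const, smul_eq_mul, mul_comm]
  -- odd component finset
  set O : Finset G.ConnectedComponent :=
    Finset.univ.filter (fun c => Odd (Nat.card c.supp)) with hO
  have hOcard : S.card + 2 ≤ O.card := by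
    refine le_trans hodd ?_
    rw [Nat.card_eq_fintype_card, Fintype.card_subtype]
  -- the small-boundary odd components
  set T : Finset G.ConnectedComponent := O.filter (fun c => (F c).card < k) with hT
  by_cases h3 : 3 ≤ T.card
  · -- extract three distinct elements
    obtain ⟨c₁, hc₁⟩ := (Finset.card_pos (s := T)).mp (by omega)
    have h2 : 2 ≤ (T.erase c₁).card := by rw [Finset.card_erase_of_mem hc₁]; omega
    obtain ⟨c₂, hc₂⟩ := (Finset.card_pos (s := T.erase c₁)).mp (by omega)
    have h1 : 1 ≤ ((T.erase c₁).erase c₂).card := by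
      rw [Finset.card_erase_of_mem hc₂]; omega
    obtain ⟨c₃, hc₃⟩ := Finset.card_pos.mp (by omega : 0 < ((T.erase c₁).erase c₂).card)
    have hmemT : ∀ c ∈ T, Odd (Nat.card c.supp) ∧ crossPairs H (Q c) (Q c)ᶜ < k := by
      intro c hc
      simp only [hT, hO, Finset.mem_filter, Finset.mem_univ, true_and] at hc
      exact ⟨hc.1, by rw [hcross]; exact hc.2⟩
    have hc₂T : c₂ ∈ T := Finset.mem_of_mem_erase hc₂
    have hc₃T : c₃ ∈ T := Finset.mem_of_mem_erase (Finset.mem_of_mem_erase hc₃)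
    refine ⟨c₁, c₂, c₃, (Finset.ne_of_mem_erase hc₂).symm,
      (Finset.ne_of_mem_erase (Finset.mem_of_mem_erase hc₃)).symm,
      (Finset.ne_of_mem_erase hc₃).symm, ?_⟩
    intro c hc
    simp only [List.mem_cons, List.not_mem_nil, or_false] at hc
    rcases hc with rfl | rfl | rfl
    · exact hmemT _ hc₁
    · exact hmemT _ hc₂T
    · exact hmemT _ hc₃T
  · -- counting contradiction
    exfalso
    push_neg at h3
    -- upper bound: sum over O of (P c).card ≤ big.card
    have hdisj : (O : Set G.ConnectedComponent).PairwiseDisjoint P := by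
      intro c₁ _ c₂ _ hne
      refine Finset.disjoint_left.mpr ?_
      intro p hp1 hp2
      simp only [hP, Finset.mem_filter, Finset.mem_univ, true_and] at hp1 hp2
      obtain ⟨u, hu, hup⟩ := hp1.1
      obtain ⟨u', hu', hup'⟩ := hp2.1
      cases Subtype.ext (hup.trans hup'.symm)
      rw [SimpleGraph.ConnectedComponent.mem_supp_iff] at hu hu'
      exact hne (hu.symm.trans hu')
    have hsumP : ∑ c ∈ O, (P c).card ≤ big.card := by
      rw [← Finset.card_biUnion (fun c hc d hd hne => hdisj hc hd hne)]
      apply Finset.card_le_card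
      intro p hp
      simp only [Finset.mem_biUnion] at hp
      obtain ⟨c, _, hpc⟩ := hp
      simp only [hP, hbig, Finset.mem_filter, Finset.mem_univ, true_and] at hpc ⊢
      exact ⟨hpc.2.1, hpc.2.2⟩
    have hsumF : ∑ c ∈ O, (F c).card ≤ k * S.card := by
      rw [← hbigcard]
      exact le_trans (Finset.sum_le_sum fun c _ => Finset.card_le_card (hFP c)) hsumP
    -- lower bound
    have hTO : T ⊆ O := Finset.filter_subset _ _
    have hsplit : ∑ c ∈ O \ T, (F c).card + ∑ c ∈ T, (F c).card = ∑ c ∈ O, (F c).card :=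
      Finset.sum_sdiff hTO
    have hlow1 : (O \ T).card * k ≤ ∑ c ∈ O \ T, (F c).card := by
      calc (O \ T).card * k = ∑ _c ∈ O \ T, k := by rw [Finset.sum_const, smul_eq_mul]
        _ ≤ _ := Finset.sum_le_sum (fun c hc => by
            have h1 : c ∉ T := (Finset.mem_sdiff.mp hc).2
            simp only [hT, Finset.mem_filter, not_and, not_lt] at h1
            exact h1 (Finset.mem_sdiff.mp hc).1)
    have hlow2 : T.card ≤ ∑ c ∈ T, (F c).card := by
      calc T.card = ∑ _c ∈ T, 1 := by simp
        _ ≤ _ := Finset.sum_le_sum fun c _ => hF1 c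
    have hcards : (O \ T).card = O.card - T.card := Finset.card_sdiff_of_subset hTO
    -- arithmetic
    have key : k * S.card + 2 ≤ k * S.card := by
      have e1 : S.card + (2 - T.card) ≤ O.card - T.card := by omega
      have e2 : k * (S.card + (2 - T.card)) ≤ k * (O.card - T.card) :=
        Nat.mul_le_mul_left k e1
      rw [Nat.mul_add] at e2
      have e3 : (2 - T.card) ≤ k * (2 - T.card) := Nat.le_mul_of_pos_left _ hk
      have e4 : k * (O.card - T.card) + T.card ≤ k * S.card := by
        calc k * (O.card - T.card) + T.card = (O \ T).card * k + T.card := by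
              rw [hcards, mul_comm]
          _ ≤ ∑ c ∈ O \ T, (F c).card + ∑ c ∈ T, (F c).card := by
              exact Nat.add_le_add hlow1 hlow2
          _ = ∑ c ∈ O, (F c).card := hsplit
          _ ≤ k * S.card := hsumF
      generalize k * S.card = a at e2 e4 ⊢
      generalize k * (2 - T.card) = b at e2 e3
      generalize k * (O.card - T.card) = d at e2 e4
      omega
    omega
end

section
/- Let d ≥ 3 be a real number and let p, s be real numbers with p ≥ d and s ≥ d. Then the 3×3 real matrix B = [[d − d/p, d/p, 0], [d/s, 0, d − d/s], [0, d, 0]] has d as an eigenvalue, and its second largest eigenvalue equals (−d/p + √((d/p)² + 4d²(1 − 1/s)(1 − 1/p)))/2. -/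
open Polynomial Matrix

/-- **Quotient matrix eigenvalues.** For real `d ≥ 3` and `p, s ≥ d`, the matrix
`B = [[d - d/p, d/p, 0], [d/s, 0, d - d/s], [0, d, 0]]` has all real eigenvalues (its
characteristic polynomial has three real roots, with multiplicity), `d` is an eigenvalue,
and the second largest eigenvalue (the middle entry of the increasingly sorted list of roots)
equals `(-d/p + √((d/p)² + 4d²(1 - 1/s)(1 - 1/p)))/2`. -/
theorem quotient_matrix_eigenvalues (d p s : ℝ) (hd : 3 ≤ d) (hp : d ≤ p) (hs : d ≤ s) :
    Multiset.card (Matrix.charpoly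
        (!![d - d / p, d / p, 0; d / s, 0, d - d / s; 0, d, 0] : Matrix (Fin 3) (Fin 3) ℝ)).roots
      = 3 ∧
    d ∈ (Matrix.charpoly
        (!![d - d / p, d / p, 0; d / s, 0, d - d / s; 0, d, 0] : Matrix (Fin 3) (Fin 3) ℝ)).roots ∧
    ((Matrix.charpoly
        (!![d - d / p, d / p, 0; d / s, 0, d - d / s; 0, d, 0] : Matrix (Fin 3) (Fin 3) ℝ)).roots.sort
          (· ≤ ·)).getD 1 0
      = (-(d / p) + Real.sqrt ((d / p) ^ 2 + 4 * d ^ 2 * (1 - 1 / s) * (1 - 1 / p))) / 2 := by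
  have hp0 : 0 < p := lt_of_lt_of_le (by linarith) hp
  have hs0 : 0 < s := lt_of_lt_of_le (by linarith) hs
  have hc : 4 * d ^ 2 * (1 - 1 / s) * (1 - 1 / p) = 4 * ((d - d / s) * (d - d / p)) := by
    field_simp
  set a := d / p with ha
  set b := d / s with hb
  have ha1 : a ≤ 1 := by rw [ha, div_le_one hp0]; exact hp
  have hb1 : b ≤ 1 := by rw [hb, div_le_one hs0]; exact hs
  have ha0 : 0 ≤ a := div_nonneg (by linarith) hp0.le
  have hb0 : 0 ≤ b := div_nonneg (by linarith) hs0.le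
  have hcnn : 0 ≤ (d - b) * (d - a) := mul_nonneg (by linarith) (by linarith)
  set r := Real.sqrt (a ^ 2 + 4 * ((d - b) * (d - a))) with hr
  have hrnn : 0 ≤ r := Real.sqrt_nonneg _
  have hr2 : r ^ 2 = a ^ 2 + 4 * ((d - b) * (d - a)) := by
    rw [hr, Real.sq_sqrt]; nlinarith
  set μ := (-a + r) / 2 with hμ
  set ν := (-a - r) / 2 with hν
  have h1 : μ + ν = -a := by rw [hμ, hν]; ring
  have h2 : μ * ν = -((d - b) * (d - a)) := by rw [hμ, hν]; nlinarith
  have hμ0 : 0 ≤ μ := by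
    have : a ≤ r := by nlinarith
    rw [hμ]; linarith
  have hν0 : ν ≤ 0 := by rw [hν]; linarith
  have hμd : μ ≤ d := by
    have : r ≤ 2 * d + a := by nlinarith
    rw [hμ]; linarith
  have key : Matrix.charpoly
      (!![d - a, a, 0; b, 0, d - b; 0, d, 0] : Matrix (Fin 3) (Fin 3) ℝ)
      = ((↑[ν, μ, d] : Multiset ℝ).map fun x => X - C x).prod := by
    have step : Matrix.charpoly
        (!![d - a, a, 0; b, 0, d - b; 0, d, 0] : Matrix (Fin 3) (Fin 3) ℝ)
        = X ^ 3 - C (d - a) * X ^ 2 - C ((d - b) * d + a * b) * X + C ((d - a) * (d - b) * d) := by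
      rw [Matrix.charpoly, Matrix.det_fin_three]
      simp [charmatrix_apply]
      ring
    rw [step]
    have e1 : (C μ : ℝ[X]) + C ν = -C a := by rw [← C_add, h1, C_neg]
    have e2 : (C μ : ℝ[X]) * C ν = -((C d - C b) * (C d - C a)) := by
      rw [← C_mul, h2, C_neg, C_mul, C_sub, C_sub]
    simp only [Multiset.map_coe, List.map_cons, List.map_nil, Multiset.prod_coe,
      List.prod_cons, List.prod_nil, C_sub, C_add, C_mul]
    linear_combination (X ^ 2 - C d * X) * e1 + (C d - X) * e2
  rw [show (!![d - d / p, d / p, 0; d / s, 0, d - d / s; 0, d, 0] : Matrix (Fin 3) (Fin 3) ℝ)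
      = !![d - a, a, 0; b, 0, d - b; 0, d, 0] from rfl, key,
    Polynomial.roots_multiset_prod_X_sub_C]
  have hsorted : List.Pairwise (· ≤ ·) [ν, μ, d] := by
    refine List.pairwise_cons.mpr ⟨?_, List.pairwise_cons.mpr ⟨?_, List.pairwise_singleton _ _⟩⟩
    · intro x hx
      simp only [List.mem_cons, List.mem_singleton, List.not_mem_nil, or_false] at hx
      rcases hx with rfl | rfl <;> linarith
    · intro x hx
      simp only [List.mem_singleton] at hx
      subst hx; linarith
  have hsort : Multiset.sort (↑[ν, μ, d] : Multiset ℝ) (· ≤ ·) = [ν, μ, d] := by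
    exact List.Perm.eq_of_pairwise'
      (Multiset.pairwise_sort _ _) hsorted
      (Multiset.coe_eq_coe.mp (by rw [Multiset.sort_eq]))
  refine ⟨by simp, by simp, ?_⟩
  rw [hsort]
  simp only [List.getD_cons_succ, List.getD_cons_zero]
  rw [hc]
end
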